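/- arXiv:1707.09918 — 2 statements merged into one kernel-verified Lean document; each statement's English description precedes it below -/
import Mathlib

section
/- In the ring of formal power series in the three variables x, s, t over ℚ, with D = 1 + (2−s−t)·g_en(x) + (1−s)·(1−t)·(g_en(x)² − g_ee(x)·g_nn(x)), the series G_ee(x,s,t) = Σ_{k≥1} Σ_{ℓ,r≥0} b^{ee}_{ℓ,r}(k)·x^k·s^ℓ·t^r and G_nn(x,s,t) = Σ_{k≥1} Σ_{ℓ,r≥0} b^{nn}_{ℓ,r}(k)·x^k·s^ℓ·t^r satisfy G_ee(x,s,t)·D = g_ee(x) and G_nn(x,s,t)·D = g_nn(x). -/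
/-!
Lattice paths with unit East (`true`) and unit North (`false`) steps,
bounces with respect to the line `y = (β/α)·x`, and the associated
generating functions over `ℚ`.
-/

/-- A lattice path is a list of unit steps: `true` = East, `false` = North. -/
abbrev LatticePath := List Bool

/-- `p` is a lattice path from `(0,0)` to `(α*k, β*k)`, i.e. a member of `L_{β/α}(k)`. -/
def InL (α β k : ℕ) (p : LatticePath) : Prop :=
  p.count true = α * k ∧ p.count false = β * k

/-- `p` has a left bounce at step index `i`: step `i` is an E-step, step `i+1` is an
N-step, and their common endpoint (the point reached after `i+1` steps) lies on the
line `y = (β/α)·x`, i.e. `α·y = β·x`. -/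
def IsLeftBounce (α β : ℕ) (p : LatticePath) (i : ℕ) : Prop :=
  p[i]? = some true ∧ p[i + 1]? = some false ∧
    α * ((p.take (i + 1)).count false) = β * ((p.take (i + 1)).count true)

/-- `p` has a right bounce at step index `i`: step `i` is an N-step, step `i+1` is an
E-step, and their common endpoint lies on the line `y = (β/α)·x`. -/
def IsRightBounce (α β : ℕ) (p : LatticePath) (i : ℕ) : Prop :=
  p[i]? = some false ∧ p[i + 1]? = some true ∧
    α * ((p.take (i + 1)).count false) = β * ((p.take (i + 1)).count true)

/-- The number of left bounces of `p` with respect to the line `y = (β/α)·x`. -/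
noncomputable def leftBounces (α β : ℕ) (p : LatticePath) : ℕ :=
  {i | IsLeftBounce α β p i}.ncard

/-- The number of right bounces of `p` with respect to the line `y = (β/α)·x`. -/
noncomputable def rightBounces (α β : ℕ) (p : LatticePath) : ℕ :=
  {i | IsRightBounce α β p i}.ncard

/-- `p` is bounce-free: it has no left and no right bounces. -/
def BounceFree (α β : ℕ) (p : LatticePath) : Prop :=
  (∀ i, ¬ IsLeftBounce α β p i) ∧ (∀ i, ¬ IsRightBounce α β p i)

/-- The first step of `p` is `a`. -/
def FirstStep (p : LatticePath) (a : Bool) : Prop := p.head? = some a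

/-- The last step of `p` is `b`. -/
def LastStep (p : LatticePath) (b : Bool) : Prop := p.getLast? = some b

/-- The generating function `Σ_{k≥1} |S k|·xᵏ ∈ ℚ[[x]]` of a family of path sets. -/
noncomputable def gfOf (S : ℕ → Set LatticePath) : PowerSeries ℚ :=
  PowerSeries.mk fun k => if k = 0 then 0 else ((S k).ncard : ℚ)

/-- `g(x) = Σ_{k≥1} C((α+β)k, αk)·xᵏ`, counting all paths in `L_{β/α}(k)`. -/
noncomputable def gSer (α β : ℕ) : PowerSeries ℚ :=
  PowerSeries.mk fun k => if k = 0 then 0 else ((((α + β) * k).choose (α * k) : ℕ) : ℚ)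

/-- `g_ee(x) = Σ_{k≥1} C((α+β)k−2, αk−2)·xᵏ`, counting EE-paths in `L_{β/α}(k)`.
We write the lower index as `βk = ((α+β)k−2) − (αk−2)`, which equals
`C((α+β)k−2, αk−2)` by the symmetry of binomial coefficients and correctly
implements the convention `C(n, −1) = 0` (needed when `αk = 1`), which ℕ-truncated
subtraction would not. -/
noncomputable def geeSer (α β : ℕ) : PowerSeries ℚ :=
  PowerSeries.mk fun k => if k = 0 then 0 else ((((α + β) * k - 2).choose (β * k) : ℕ) : ℚ)

/-- `g_en(x) = Σ_{k≥1} C((α+β)k−2, αk−1)·xᵏ`, counting EN-paths in `L_{β/α}(k)`. -/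
noncomputable def genSer (α β : ℕ) : PowerSeries ℚ :=
  PowerSeries.mk fun k => if k = 0 then 0 else ((((α + β) * k - 2).choose (α * k - 1) : ℕ) : ℚ)

/-- `g_nn(x) = Σ_{k≥1} C((α+β)k−2, αk)·xᵏ`, counting NN-paths in `L_{β/α}(k)`. -/
noncomputable def gnnSer (α β : ℕ) : PowerSeries ℚ :=
  PowerSeries.mk fun k => if k = 0 then 0 else ((((α + β) * k - 2).choose (α * k) : ℕ) : ℚ)

/-- `f_ee(x)`: generating function of bounce-free EE-paths in `L_{β/α}(k)`. -/
noncomputable def feeSer (α β : ℕ) : PowerSeries ℚ :=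
  gfOf fun k => {p | InL α β k p ∧ BounceFree α β p ∧ FirstStep p true ∧ LastStep p true}

/-- `f_en(x)`: generating function of bounce-free EN-paths in `L_{β/α}(k)`. -/
noncomputable def fenSer (α β : ℕ) : PowerSeries ℚ :=
  gfOf fun k => {p | InL α β k p ∧ BounceFree α β p ∧ FirstStep p true ∧ LastStep p false}

/-- `f_nn(x)`: generating function of bounce-free NN-paths in `L_{β/α}(k)`. -/
noncomputable def fnnSer (α β : ℕ) : PowerSeries ℚ :=
  gfOf fun k => {p | InL α β k p ∧ BounceFree α β p ∧ FirstStep p false ∧ LastStep p false}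

/-- `f(x)`: generating function of all bounce-free paths in `L_{β/α}(k)`. -/
noncomputable def fSer (α β : ℕ) : PowerSeries ℚ :=
  gfOf fun k => {p | InL α β k p ∧ BounceFree α β p}

/-- `B_{ℓ,r}(x)`: generating function of paths in `L_{β/α}(k)` with exactly `ℓ`
left bounces and exactly `r` right bounces. -/
noncomputable def BSer (α β ℓ r : ℕ) : PowerSeries ℚ :=
  gfOf fun k => {p | InL α β k p ∧ leftBounces α β p = ℓ ∧ rightBounces α β p = r}

/-- The Fuss–Catalan generating function `c_α(x) = Σ_{k≥0} 1/(αk+1)·C((α+1)k, k)·xᵏ`. -/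
noncomputable def fussCatalan (α : ℕ) : PowerSeries ℚ :=
  PowerSeries.mk fun k => (1 / ((α * k + 1 : ℕ) : ℚ)) * ((((α + 1) * k).choose k : ℕ) : ℚ)

/-- For slope `1/α`: `p` has a horizontal cross at the lattice point `(α*i, i)` (`i ≥ 1`):
`p` passes through `(α*i, i)` (so the prefix of length `(α+1)*i` has exactly `α*i`
E-steps), and both the step ending there and the step starting there are E-steps. -/
def HasHCrossAt (α : ℕ) (p : LatticePath) (i : ℕ) : Prop :=
  1 ≤ i ∧ (p.take ((α + 1) * i)).count true = α * i ∧
    p[(α + 1) * i - 1]? = some true ∧ p[(α + 1) * i]? = some true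

/-- `p` has no horizontal crosses with respect to the line `y = x/α`. -/
def NoHCross (α : ℕ) (p : LatticePath) : Prop := ∀ i, ¬ HasHCrossAt α p i

/-- Embed a power series in `x` into `ℚ[[x,s,t]]`, where the variables
`0, 1, 2 : Fin 3` stand for `x, s, t` respectively. -/
noncomputable def toMv (φ : PowerSeries ℚ) : MvPowerSeries (Fin 3) ℚ := fun d =>
  if d 1 = 0 ∧ d 2 = 0 then PowerSeries.coeff (d 0) φ else 0

/-- The variable `s` of `ℚ[[x,s,t]]`. -/
noncomputable def sVar : MvPowerSeries (Fin 3) ℚ := MvPowerSeries.X 1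

/-- The variable `t` of `ℚ[[x,s,t]]`. -/
noncomputable def tVar : MvPowerSeries (Fin 3) ℚ := MvPowerSeries.X 2

/-- `G(x,s,t) = Σ_{k≥1} Σ_{ℓ,r≥0} b_{ℓ,r}(k)·xᵏsˡtʳ`, where `b_{ℓ,r}(k)` is the number
of paths in `L_{β/α}(k)` with exactly `ℓ` left and `r` right bounces. -/
noncomputable def G3 (α β : ℕ) : MvPowerSeries (Fin 3) ℚ := fun d =>
  if d 0 = 0 then 0 else
    (({p | InL α β (d 0) p ∧ leftBounces α β p = d 1 ∧
        rightBounces α β p = d 2}).ncard : ℚ)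

/-- `G_ab(x,s,t) = Σ_{k≥1} Σ_{ℓ,r≥0} b^{ab}_{ℓ,r}(k)·xᵏsˡtʳ`, where `b^{ab}_{ℓ,r}(k)`
is the number of AB-paths in `L_{β/α}(k)` with exactly `ℓ` left and `r` right
bounces. -/
noncomputable def G3ab (α β : ℕ) (a b : Bool) : MvPowerSeries (Fin 3) ℚ := fun d =>
  if d 0 = 0 then 0 else
    (({p | InL α β (d 0) p ∧ FirstStep p a ∧ LastStep p b ∧
        leftBounces α β p = d 1 ∧ rightBounces α β p = d 2}).ncard : ℚ)

/-- The denominator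
`D = 1 + (2−s−t)·g_en(x) + (1−s)·(1−t)·(g_en(x)² − g_ee(x)·g_nn(x)) ∈ ℚ[[x,s,t]]`. -/
noncomputable def D3 (α β : ℕ) : MvPowerSeries (Fin 3) ℚ :=
  1 + (2 - sVar - tVar) * toMv (genSer α β)
    + (1 - sVar) * (1 - tVar) *
        (toMv (genSer α β) ^ 2 - toMv (geeSer α β) * toMv (gnnSer α β))

namespace S9

open Set List

/-! ### Basic list lemmas -/

lemma count_add_count (p : List Bool) : p.count true + p.count false = p.length := by
  induction p with
  | nil => simp
  | cons b t ih => cases b <;> simp [List.count_cons] <;> omega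

lemma finite_count (e f : ℕ) :
    {p : List Bool | p.count true = e ∧ p.count false = f}.Finite := by
  apply (List.finite_length_eq (α := Bool) (e + f)).subset
  rintro p ⟨h1, h2⟩
  simp only [Set.mem_setOf_eq]
  rw [← count_add_count p, h1, h2]

/-! ### Counting lists with prescribed counts -/

lemma ncard_count : ∀ n e f : ℕ, e + f = n →
    {p : List Bool | p.count true = e ∧ p.count false = f}.ncard = n.choose e := by
  intro n
  induction n with
  | zero =>
    intro e f h
    obtain ⟨rfl, rfl⟩ : e = 0 ∧ f = 0 := by omega
    have : {p : List Bool | p.count true = 0 ∧ p.count false = 0} = {([] : List Bool)} := by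
      ext p
      simp only [Set.mem_setOf_eq, Set.mem_singleton_iff]
      constructor
      · rintro ⟨h1, h2⟩
        have := count_add_count p
        rw [h1, h2] at this
        exact List.length_eq_zero_iff.mp (by omega)
      · rintro rfl; simp
    rw [this, Set.ncard_singleton, Nat.choose_zero_right]
  | succ n ih =>
    intro e f h
    rcases Nat.eq_zero_or_pos e with rfl | he
    · -- all-false lists
      have : {p : List Bool | p.count true = 0 ∧ p.count false = f}
          = {List.replicate f false} := by
        ext p
        simp only [Set.mem_setOf_eq, Set.mem_singleton_iff]
        constructor
        · rintro ⟨h1, h2⟩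
          have hlen := count_add_count p
          rw [h1, h2] at hlen
          refine List.eq_replicate_iff.mpr ⟨by omega, ?_⟩
          intro b hb
          cases b
          · rfl
          · exfalso
            have := (List.count_pos_iff (a := true) (l := p)).mpr hb
            omega
        · rintro rfl
          constructor
          · simp [List.count_replicate]
          · simp [List.count_replicate]
      rw [this, Set.ncard_singleton, Nat.choose_zero_right]
    rcases Nat.eq_zero_or_pos f with rfl | hf
    · have : {p : List Bool | p.count true = e ∧ p.count false = 0}
          = {List.replicate e true} := by
        ext p
        simp only [Set.mem_setOf_eq, Set.mem_singleton_iff]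
        constructor
        · rintro ⟨h1, h2⟩
          have hlen := count_add_count p
          rw [h1, h2] at hlen
          refine List.eq_replicate_iff.mpr ⟨by omega, ?_⟩
          intro b hb
          cases b
          · exfalso
            have := (List.count_pos_iff (a := false) (l := p)).mpr hb
            omega
          · rfl
        · rintro rfl
          constructor
          · simp [List.count_replicate]
          · simp [List.count_replicate]
      rw [this, Set.ncard_singleton]
      rw [Nat.add_zero] at h; subst h
      simp [Nat.choose_self]
    -- e ≥ 1, f ≥ 1
    obtain ⟨e', rfl⟩ : ∃ e', e = e' + 1 := ⟨e - 1, by omega⟩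
    have hsplit : {p : List Bool | p.count true = e' + 1 ∧ p.count false = f}
        = (List.cons true '' {p | p.count true = e' ∧ p.count false = f})
          ∪ (List.cons false '' {p | p.count true = e' + 1 ∧ p.count false = f - 1}) := by
      ext p
      simp only [Set.mem_setOf_eq, Set.mem_union, Set.mem_image]
      constructor
      · rintro ⟨h1, h2⟩
        match p with
        | [] => simp at h1
        | true :: q =>
          left
          refine ⟨q, ⟨?_, ?_⟩, rfl⟩ <;> simp [List.count_cons] at h1 h2 ⊢ <;> omega
        | false :: q =>
          right
          refine ⟨q, ⟨?_, ?_⟩, rfl⟩ <;> simp [List.count_cons] at h1 h2 ⊢ <;> omega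
      · rintro (⟨q, ⟨h1, h2⟩, rfl⟩ | ⟨q, ⟨h1, h2⟩, rfl⟩) <;>
          simp [List.count_cons, h1, h2] <;> omega
    rw [hsplit, Set.ncard_union_eq ?disj ?f1 ?f2]
    case disj =>
      rw [Set.disjoint_left]
      rintro p ⟨q, _, rfl⟩ ⟨q', _, h⟩
      simp at h
    case f1 => exact (finite_count e' f).image _
    case f2 => exact (finite_count (e' + 1) (f - 1)).image _
    rw [Set.ncard_image_of_injective _ (fun a b h => by injection h),
        Set.ncard_image_of_injective _ (fun a b h => by injection h)]
    rw [ih e' f (by omega), ih (e' + 1) (f - 1) (by omega)]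
    have : n.choose e' + n.choose (e' + 1) = (n + 1).choose (e' + 1) :=
      (Nat.choose_succ_succ n e').symm
    omega

end S9
namespace S9

open Set List

lemma ncard_count_first_last (e f : ℕ) (a b : Bool) (h2 : 2 ≤ e + f) :
    {p : List Bool | p.count true = e ∧ p.count false = f ∧ FirstStep p a ∧ LastStep p b}.ncard
    = {m : List Bool | m.count true + (a.toNat + b.toNat) = e ∧
        m.count false + ((!a).toNat + (!b).toNat) = f}.ncard := by
  have himg : {p : List Bool | p.count true = e ∧ p.count false = f ∧ FirstStep p a ∧ LastStep p b}
      = (fun m => a :: (m ++ [b])) '' {m : List Bool | m.count true + (a.toNat + b.toNat) = e ∧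
          m.count false + ((!a).toNat + (!b).toNat) = f} := by
    ext p
    simp only [Set.mem_setOf_eq, Set.mem_image]
    constructor
    · rintro ⟨h1, h1', hfst, hlst⟩
      unfold FirstStep at hfst
      unfold LastStep at hlst
      rw [List.getLast?_eq_some_iff] at hlst
      obtain ⟨ys, rfl⟩ := hlst
      have hys : ys ≠ [] := by
        rintro rfl
        cases b <;> simp at h1 h1' <;> omega
      rw [List.head?_append_of_ne_nil _ hys] at hfst
      match ys, hys, hfst with
      | a :: m, _, hfst =>
        simp only [List.head?_cons, Option.some.injEq] at hfst
        subst hfst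
        refine ⟨m, ⟨?_, ?_⟩, rfl⟩ <;>
          cases a <;> cases b <;>
            simp [List.count_cons, List.count_append] at h1 h1' ⊢ <;> omega
    · rintro ⟨m, ⟨hm1, hm2⟩, rfl⟩
      refine ⟨?_, ?_, ?_, ?_⟩
      · cases a <;> cases b <;> simp [List.count_cons, List.count_append] at hm1 ⊢ <;> omega
      · cases a <;> cases b <;> simp [List.count_cons, List.count_append] at hm2 ⊢ <;> omega
      · rfl
      · unfold LastStep
        rw [List.getLast?_eq_some_iff]
        exact ⟨a :: m, rfl⟩
  rw [himg]
  apply Set.ncard_image_of_injective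
  intro m m' h
  simp only [List.cons.injEq] at h
  exact List.append_left_injective _ h.2

lemma mid_set_eq (e f c1 c2 : ℕ) (h1 : c1 ≤ e) (h2 : c2 ≤ f) :
    {m : List Bool | m.count true + c1 = e ∧ m.count false + c2 = f}
    = {m : List Bool | m.count true = e - c1 ∧ m.count false = f - c2} := by
  ext m; simp only [Set.mem_setOf_eq]; omega

lemma mid_set_empty (e f c1 c2 : ℕ) (h : ¬ (c1 ≤ e ∧ c2 ≤ f)) :
    {m : List Bool | m.count true + c1 = e ∧ m.count false + c2 = f} = ∅ := by
  ext m; simp only [Set.mem_setOf_eq, Set.mem_empty_iff_false, iff_false]; omega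

/-- The number of AB-paths in `L_{β/α}(k)` for each of the four (a,b) pairs. -/
lemma ncard_paths_tt (α β k : ℕ) (hα : 0 < α) (hβ : 0 < β) (hk : 1 ≤ k) :
    {p | InL α β k p ∧ FirstStep p true ∧ LastStep p true}.ncard
    = ((α + β) * k - 2).choose (β * k) := by
  have he : 1 ≤ α * k := Nat.mul_le_mul hα hk
  have hf : 1 ≤ β * k := Nat.mul_le_mul hβ hk
  have hn : (α + β) * k = α * k + β * k := add_mul α β k
  have hset : {p | InL α β k p ∧ FirstStep p true ∧ LastStep p true}
      = {p : List Bool | p.count true = α * k ∧ p.count false = β * k ∧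
          FirstStep p true ∧ LastStep p true} := by
    ext p; simp only [Set.mem_setOf_eq, InL]; tauto
  rw [hset, ncard_count_first_last _ _ _ _ (by omega)]
  simp only [Bool.toNat_true, Bool.not_true, Bool.toNat_false]
  rcases Nat.lt_or_ge (α * k) 2 with h1 | h1
  · -- α*k = 1 : empty, and binomial is 0
    rw [mid_set_empty _ _ _ _ (by omega), Set.ncard_empty,
      Nat.choose_eq_zero_of_lt (by omega)]
  · rw [mid_set_eq _ _ _ _ (by omega) (by omega), ncard_count _ _ _ rfl]
    have : α * k - (1 + 1) + (β * k - (0 + 0)) = (α + β) * k - 2 := by omega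
    rw [this]
    rw [show α * k - (1 + 1) = ((α + β) * k - 2) - β * k by omega]
    exact Nat.choose_symm (by omega)

lemma ncard_paths_ff (α β k : ℕ) (hα : 0 < α) (hβ : 0 < β) (hk : 1 ≤ k) :
    {p | InL α β k p ∧ FirstStep p false ∧ LastStep p false}.ncard
    = ((α + β) * k - 2).choose (α * k) := by
  have he : 1 ≤ α * k := Nat.mul_le_mul hα hk
  have hf : 1 ≤ β * k := Nat.mul_le_mul hβ hk
  have hn : (α + β) * k = α * k + β * k := add_mul α β k
  have hset : {p | InL α β k p ∧ FirstStep p false ∧ LastStep p false}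
      = {p : List Bool | p.count true = α * k ∧ p.count false = β * k ∧
          FirstStep p false ∧ LastStep p false} := by
    ext p; simp only [Set.mem_setOf_eq, InL]; tauto
  rw [hset, ncard_count_first_last _ _ _ _ (by omega)]
  simp only [Bool.toNat_false, Bool.not_false, Bool.toNat_true]
  rcases Nat.lt_or_ge (β * k) 2 with h1 | h1
  · rw [mid_set_empty _ _ _ _ (by omega), Set.ncard_empty,
      Nat.choose_eq_zero_of_lt (by omega)]
  · rw [mid_set_eq _ _ _ _ (by omega) (by omega), ncard_count _ _ _ rfl]
    congr 1
    omega

lemma ncard_paths_mixed (α β k : ℕ) (hα : 0 < α) (hβ : 0 < β) (hk : 1 ≤ k) (a : Bool) :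
    {p | InL α β k p ∧ FirstStep p a ∧ LastStep p (!a)}.ncard
    = ((α + β) * k - 2).choose (α * k - 1) := by
  have he : 1 ≤ α * k := Nat.mul_le_mul hα hk
  have hf : 1 ≤ β * k := Nat.mul_le_mul hβ hk
  have hn : (α + β) * k = α * k + β * k := add_mul α β k
  have hset : {p | InL α β k p ∧ FirstStep p a ∧ LastStep p (!a)}
      = {p : List Bool | p.count true = α * k ∧ p.count false = β * k ∧
          FirstStep p a ∧ LastStep p (!a)} := by
    ext p; simp only [Set.mem_setOf_eq, InL]; tauto
  rw [hset, ncard_count_first_last _ _ _ _ (by omega)]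
  cases a
  · simp only [Bool.toNat_false, Bool.not_false, Bool.toNat_true, Bool.not_true]
    rw [mid_set_eq _ _ _ _ (by omega) (by omega), ncard_count _ _ _ rfl]
    have h9 : α * k - (0 + 1) + (β * k - (1 + 0)) = (α + β) * k - 2 := by omega
    rw [h9]
  · simp only [Bool.toNat_false, Bool.not_false, Bool.toNat_true, Bool.not_true]
    rw [mid_set_eq _ _ _ _ (by omega) (by omega), ncard_count _ _ _ rfl]
    have h9 : α * k - (1 + 0) + (β * k - (0 + 1)) = (α + β) * k - 2 := by omega
    rw [h9]

end S9
namespace S9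

open Set List

/-! ### Bounce lemmas -/

/-- Uniform version of left/right bounce: `c = true` gives a left bounce. -/
def IsB (α β : ℕ) (p : LatticePath) (i : ℕ) (c : Bool) : Prop :=
  p[i]? = some c ∧ p[i + 1]? = some (!c) ∧
    α * ((p.take (i + 1)).count false) = β * ((p.take (i + 1)).count true)

lemma isLeftBounce_iff_isB (α β : ℕ) (p : LatticePath) (i : ℕ) :
    IsLeftBounce α β p i ↔ IsB α β p i true := Iff.rfl

lemma isRightBounce_iff_isB (α β : ℕ) (p : LatticePath) (i : ℕ) :
    IsRightBounce α β p i ↔ IsB α β p i false := Iff.rfl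

lemma IsB.lt_length {α β : ℕ} {p : LatticePath} {i : ℕ} {c : Bool}
    (h : IsB α β p i c) : i + 1 < p.length :=
  (List.getElem?_eq_some_iff.mp h.2.1).1

lemma finite_isB (α β : ℕ) (p : LatticePath) (c : Bool) :
    {i | IsB α β p i c}.Finite :=
  (Set.finite_Iio p.length).subset fun i hi =>
    lt_of_le_of_lt (Nat.le_succ i) (IsB.lt_length hi)

lemma bounceFree_iff_isB (α β : ℕ) (p : LatticePath) :
    BounceFree α β p ↔ ∀ i c, ¬ IsB α β p i c := by
  constructor
  · rintro ⟨hL, hR⟩ i c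
    cases c
    · exact hR i
    · exact hL i
  · intro h
    exact ⟨fun i => h i true, fun i => h i false⟩

lemma leftBounces_eq (α β : ℕ) (p : LatticePath) :
    leftBounces α β p = {i | IsB α β p i true}.ncard := rfl

lemma rightBounces_eq (α β : ℕ) (p : LatticePath) :
    rightBounces α β p = {i | IsB α β p i false}.ncard := rfl

section Append

variable {α β : ℕ} {q₁ q₂ : LatticePath}

/-- Bounces strictly inside the first part. -/
lemma isB_append_left (i : ℕ) (hi : i + 1 < q₁.length) (c : Bool) :
    IsB α β (q₁ ++ q₂) i c ↔ IsB α β q₁ i c := by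
  unfold IsB
  rw [List.getElem?_append_left (by omega), List.getElem?_append_left (by omega),
    List.take_append_of_le_length (by omega)]

/-- The junction bounce. -/
lemma isB_append_junction (hq : α * q₁.count false = β * q₁.count true)
    (hm : 1 ≤ q₁.length) (c : Bool) :
    IsB α β (q₁ ++ q₂) (q₁.length - 1) c ↔
      (q₁.getLast? = some c ∧ q₂.head? = some (!c)) := by
  unfold IsB
  have h1 : q₁.length - 1 + 1 = q₁.length := by omega
  rw [h1, List.getElem?_append_left (by omega), List.getElem?_append_right (le_refl _),
    Nat.sub_self, List.take_append_of_le_length (le_refl _), List.take_length,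
    ← List.getLast?_eq_getElem?, ← List.head?_eq_getElem?]
  simp [hq]

/-- Bounces inside the second part. -/
lemma isB_append_right (hq : α * q₁.count false = β * q₁.count true)
    (i : ℕ) (c : Bool) :
    IsB α β (q₁ ++ q₂) (q₁.length + i) c ↔ IsB α β q₂ i c := by
  unfold IsB
  rw [List.getElem?_append_right (by omega), List.getElem?_append_right (by omega),
    Nat.add_sub_cancel_left, show q₁.length + i + 1 - q₁.length = i + 1 by omega,
    show q₁.length + i + 1 = q₁.length + (i + 1) by omega, List.take_length_add_append,
    List.count_append, List.count_append]
  constructor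
  · rintro ⟨h1, h2, h3⟩
    refine ⟨h1, h2, ?_⟩
    rw [Nat.mul_add, Nat.mul_add, hq, add_right_inj] at h3
    exact h3
  · rintro ⟨h1, h2, h3⟩
    refine ⟨h1, h2, ?_⟩
    rw [Nat.mul_add, Nat.mul_add, hq, add_right_inj]
    exact h3

/-- Decomposition of the bounce set of a glued path whose first part is
bounce-free. -/
lemma isB_set_append (hbf : BounceFree α β q₁)
    (hq : α * q₁.count false = β * q₁.count true) (hm : 1 ≤ q₁.length)
    {cj : Bool} (hlast : q₁.getLast? = some cj) (hhead : q₂.head? = some (!cj))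
    (c : Bool) :
    {i | IsB α β (q₁ ++ q₂) i c}
      = (if c = cj then {q₁.length - 1} else ∅)
        ∪ (fun i => q₁.length + i) '' {i | IsB α β q₂ i c} := by
  rw [bounceFree_iff_isB] at hbf
  ext i
  simp only [Set.mem_setOf_eq, Set.mem_union, Set.mem_image]
  rcases Nat.lt_or_ge (i + 1) q₁.length with hi | hi
  · rw [isB_append_left i hi]
    constructor
    · intro h; exact absurd h (hbf i c)
    · rintro (h | ⟨i', hi', rfl⟩)
      · exfalso
        rcases Bool.decEq c cj with h' | h' <;> simp [h'] at h
        omega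
      · omega
  rcases Nat.lt_or_ge i q₁.length with hi2 | hi2
  · have hieq : i = q₁.length - 1 := by omega
    subst hieq
    rw [isB_append_junction hq hm]
    constructor
    · rintro ⟨h1, h2⟩
      have hc : c = cj := by
        rw [hlast] at h1
        exact (Option.some.inj h1).symm
      subst hc
      left
      simp
    · rintro (h | ⟨i', hi', heq⟩)
      · by_cases hc : c = cj
        · subst hc
          exact ⟨hlast, hhead⟩
        · simp [hc] at h
      · omega
  · obtain ⟨i', rfl⟩ : ∃ i', i = q₁.length + i' := ⟨i - q₁.length, by omega⟩
    rw [isB_append_right hq]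
    constructor
    · intro h
      right
      exact ⟨i', h, rfl⟩
    · rintro (h | ⟨i'', hi'', heq⟩)
      · exfalso
        by_cases hc : c = cj <;> simp [hc] at h
        omega
      · have : i'' = i' := by omega
        subst this
        exact hi''

end Append

end S9
namespace S9

open Set List

section Append2

variable {α β : ℕ} {q₁ q₂ : LatticePath} {cj : Bool}

lemma ncard_isB_append (hbf : BounceFree α β q₁)
    (hq : α * q₁.count false = β * q₁.count true) (hm : 1 ≤ q₁.length)
    (hlast : q₁.getLast? = some cj) (hhead : q₂.head? = some (!cj)) (c : Bool) :
    {i | IsB α β (q₁ ++ q₂) i c}.ncard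
      = {i | IsB α β q₂ i c}.ncard + (if c = cj then 1 else 0) := by
  rw [isB_set_append hbf hq hm hlast hhead c]
  rw [Set.ncard_union_eq ?disj ?f1 ?f2]
  case disj =>
    rw [Set.disjoint_left]
    rintro i hi ⟨i', hi', rfl⟩
    by_cases hc : c = cj <;> simp [hc] at hi
    omega
  case f1 =>
    by_cases hc : c = cj <;> simp [hc]
  case f2 => exact (finite_isB α β q₂ c).image _
  rw [Set.ncard_image_of_injective _ (add_right_injective q₁.length)]
  by_cases hc : c = cj <;> simp [hc] <;> omega

lemma leftBounces_append (hbf : BounceFree α β q₁)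
    (hq : α * q₁.count false = β * q₁.count true) (hm : 1 ≤ q₁.length)
    (hlast : q₁.getLast? = some cj) (hhead : q₂.head? = some (!cj)) :
    leftBounces α β (q₁ ++ q₂) = leftBounces α β q₂ + cj.toNat := by
  rw [leftBounces_eq, leftBounces_eq, ncard_isB_append hbf hq hm hlast hhead true]
  cases cj <;> simp

lemma rightBounces_append (hbf : BounceFree α β q₁)
    (hq : α * q₁.count false = β * q₁.count true) (hm : 1 ≤ q₁.length)
    (hlast : q₁.getLast? = some cj) (hhead : q₂.head? = some (!cj)) :
    rightBounces α β (q₁ ++ q₂) = rightBounces α β q₂ + (!cj).toNat := by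
  rw [rightBounces_eq, rightBounces_eq, ncard_isB_append hbf hq hm hlast hhead false]
  cases cj <;> simp

lemma not_bounceFree_append
    (hq : α * q₁.count false = β * q₁.count true) (hm : 1 ≤ q₁.length)
    (hlast : q₁.getLast? = some cj) (hhead : q₂.head? = some (!cj)) :
    ¬ BounceFree α β (q₁ ++ q₂) := by
  rw [bounceFree_iff_isB]
  push_neg
  exact ⟨q₁.length - 1, cj, (isB_append_junction hq hm cj).mpr ⟨hlast, hhead⟩⟩

end Append2

/-! ### Generic counting helpers -/

lemma inL_length {α β k : ℕ} {p : LatticePath} (h : InL α β k p) :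
    p.length = (α + β) * k := by
  rw [← count_add_count p, h.1, h.2, add_mul]

lemma finite_paths_sub {α β k : ℕ} (P : LatticePath → Prop) :
    {p | InL α β k p ∧ P p}.Finite := by
  apply (finite_count (α * k) (β * k)).subset
  rintro p ⟨⟨h1, h2⟩, -⟩
  exact ⟨h1, h2⟩

lemma ncard_biUnion {ι X : Type*} (s : Finset ι) (f : ι → Set X)
    (hfin : ∀ i ∈ s, (f i).Finite)
    (hdisj : ∀ i ∈ s, ∀ j ∈ s, i ≠ j → Disjoint (f i) (f j)) :
    (⋃ i ∈ s, f i).ncard = ∑ i ∈ s, (f i).ncard := by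
  classical
  induction s using Finset.induction with
  | empty => simp
  | insert x s hx ih =>
    rw [Finset.sum_insert hx]
    have hun : (⋃ i ∈ insert x s, f i) = f x ∪ ⋃ i ∈ s, f i := by
      rw [Finset.set_biUnion_insert]
    rw [hun, Set.ncard_union_eq ?_ ?_ ?_]
    · rw [ih (fun i hi => hfin i (Finset.mem_insert_of_mem hi))
        (fun i hi j hj hij => hdisj i (Finset.mem_insert_of_mem hi)
          j (Finset.mem_insert_of_mem hj) hij)]
    · apply Set.disjoint_left.mpr
      rintro p hp hp'
      simp only [Set.mem_iUnion] at hp'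
      obtain ⟨i, hi, hpi⟩ := hp'
      exact Set.disjoint_left.mp
        (hdisj x (Finset.mem_insert_self x s) i (Finset.mem_insert_of_mem hi)
          (by rintro rfl; exact hx hi)) hp hpi
    · exact hfin x (Finset.mem_insert_self x s)
    · exact Set.Finite.biUnion s.finite_toSet
        (fun i hi => hfin i (Finset.mem_insert_of_mem hi))

lemma ncard_prod {X Y : Type*} (s : Set X) (t : Set Y) :
    (s ×ˢ t).ncard = s.ncard * t.ncard := by
  rw [← Nat.card_coe_set_eq, ← Nat.card_coe_set_eq, ← Nat.card_coe_set_eq,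
    Nat.card_congr (Equiv.Set.prod s t), Nat.card_prod]

end S9
namespace S9

open Set List

variable {α β : ℕ}

/-- Any bounce of a path in `L_{β/α}(k)` happens at a lattice point `(αj, βj)` of the
line, i.e. at step index `(α+β)j - 1`. -/
lemma bounce_position (hα : 0 < α) (hβ : 0 < β) (hcop : Nat.Coprime α β)
    {k : ℕ} {p : LatticePath} (hp : InL α β k p) {i : ℕ} {c : Bool}
    (hB : IsB α β p i c) :
    ∃ j, 1 ≤ j ∧ j < k ∧ i + 1 = (α + β) * j ∧
      (p.take ((α + β) * j)).count true = α * j ∧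
      (p.take ((α + β) * j)).count false = β * j := by
  have hlen : i + 1 < p.length := hB.lt_length
  set T := (p.take (i + 1)).count true with hT
  set F := (p.take (i + 1)).count false with hF
  have hsum : T + F = i + 1 := by
    rw [hT, hF, count_add_count, List.length_take]
    omega
  have hline : α * F = β * T := hB.2.2
  have hdvd : α ∣ T := by
    apply Nat.Coprime.dvd_of_dvd_mul_left hcop
    exact ⟨F, hline.symm⟩
  obtain ⟨j, hj⟩ := hdvd
  have hFj : F = β * j := by
    have : α * F = α * (β * j) := by
      rw [hline, hj]; ring
    exact Nat.eq_of_mul_eq_mul_left hα this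
  have hj1 : 1 ≤ j := by
    rcases Nat.eq_zero_or_pos j with rfl | h
    · simp at hj hFj
      omega
    · exact h
  have hieq : i + 1 = (α + β) * j := by
    rw [← hsum, hj, hFj]; ring
  have hjk : j < k := by
    have hplen : p.length = (α + β) * k := inL_length hp
    have h1 : (α + β) * j < (α + β) * k := by omega
    exact lt_of_mul_lt_mul_left h1 (Nat.zero_le _)
  exact ⟨j, hj1, hjk, hieq, by rw [← hieq, ← hT, hj], by rw [← hieq, ← hF, hFj]⟩

/-- Splitting a non-bounce-free path at its first bounce. -/
lemma first_bounce_split (hα : 0 < α) (hβ : 0 < β) (hcop : Nat.Coprime α β)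
    {k : ℕ} {p : LatticePath} (hp : InL α β k p) (hnb : ¬ BounceFree α β p) :
    ∃ j c, 1 ≤ j ∧ j < k ∧
      InL α β j (p.take ((α + β) * j)) ∧
      BounceFree α β (p.take ((α + β) * j)) ∧
      (p.take ((α + β) * j)).getLast? = some c ∧
      InL α β (k - j) (p.drop ((α + β) * j)) ∧
      (p.drop ((α + β) * j)).head? = some (!c) := by
  rw [bounceFree_iff_isB] at hnb
  push_neg at hnb
  set S : Set ℕ := {i | ∃ c, IsB α β p i c} with hS
  have hSne : S.Nonempty := by
    obtain ⟨i, c, h⟩ := hnb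
    exact ⟨i, c, h⟩
  set i₀ := sInf S with hi₀
  obtain ⟨c, hB⟩ : i₀ ∈ S := Nat.sInf_mem hSne
  obtain ⟨j, hj1, hjk, hieq, hTake, hFake⟩ := bounce_position hα hβ hcop hp hB
  set m := (α + β) * j with hm
  have hlen : i₀ + 1 < p.length := hB.lt_length
  have hplen : p.length = (α + β) * k := inL_length hp
  have hq₁len : (p.take m).length = m := by
    rw [List.length_take]; omega
  have hInL1 : InL α β j (p.take m) := ⟨hTake, hFake⟩
  have happ : p.take m ++ p.drop m = p := List.take_append_drop m p
  have hbf1 : BounceFree α β (p.take m) := by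
    rw [bounceFree_iff_isB]
    intro i c' hic
    have hi1 : i + 1 < m := by
      have := hic.lt_length
      omega
    have h2 : IsB α β (p.take m ++ p.drop m) i c' :=
      (isB_append_left i (by rw [hq₁len]; omega) c').mpr hic
    rw [happ] at h2
    have hmem : i ∈ S := ⟨c', h2⟩
    have := Nat.sInf_le hmem
    omega
  have hlast : (p.take m).getLast? = some c := by
    rw [List.getLast?_eq_getElem?, hq₁len, List.getElem?_take]
    rw [if_pos (by omega)]
    have : m - 1 = i₀ := by omega
    rw [this]
    exact hB.1
  have hhead : (p.drop m).head? = some (!c) := by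
    rw [List.head?_eq_getElem?, List.getElem?_drop]
    have : m + 0 = i₀ + 1 := by omega
    rw [this]
    exact hB.2.1
  have hInL2 : InL α β (k - j) (p.drop m) := by
    constructor
    · have h1 : (p.take m).count true + (p.drop m).count true = p.count true := by
        rw [← List.count_append, happ]
      have h2 := Nat.mul_sub α k j
      have := hp.1
      omega
    · have h1 : (p.take m).count false + (p.drop m).count false = p.count false := by
        rw [← List.count_append, happ]
      have h2 := Nat.mul_sub β k j
      have := hp.2
      omega
  exact ⟨j, c, hj1, hjk, hInL1, hbf1, hlast, hInL2, hhead⟩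

end S9
namespace S9

open Set List

variable {α β : ℕ}

lemma glue_spec (hα : 0 < α) (hβ : 0 < β) {j k : ℕ} (hj1 : 1 ≤ j) (hjk : j < k)
    {a b c : Bool} {q₁ q₂ : LatticePath}
    (hI1 : InL α β j q₁) (hbf : BounceFree α β q₁)
    (hf1 : FirstStep q₁ a) (hl1 : LastStep q₁ c)
    (hI2 : InL α β (k - j) q₂) (hf2 : FirstStep q₂ (!c)) (hl2 : LastStep q₂ b) :
    InL α β k (q₁ ++ q₂) ∧ FirstStep (q₁ ++ q₂) a ∧ LastStep (q₁ ++ q₂) b ∧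
      ¬ BounceFree α β (q₁ ++ q₂) ∧
      leftBounces α β (q₁ ++ q₂) = leftBounces α β q₂ + c.toNat ∧
      rightBounces α β (q₁ ++ q₂) = rightBounces α β q₂ + (!c).toNat ∧
      IsB α β (q₁ ++ q₂) (q₁.length - 1) c ∧
      (∀ i c', IsB α β (q₁ ++ q₂) i c' → q₁.length - 1 ≤ i) := by
  have hq1len : q₁.length = (α + β) * j := inL_length hI1
  have hq2len : q₂.length = (α + β) * (k - j) := inL_length hI2
  have hm : 1 ≤ q₁.length := by
    rw [hq1len]
    exact Nat.mul_pos (by omega) (by omega)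
  have hq2ne : q₂ ≠ [] := by
    apply List.ne_nil_of_length_pos
    rw [hq2len]
    exact Nat.mul_pos (by omega) (by omega)
  have hq1ne : q₁ ≠ [] := List.ne_nil_of_length_pos (by omega)
  have hq : α * q₁.count false = β * q₁.count true := by
    rw [hI1.1, hI1.2]; ring
  refine ⟨?_, ?_, ?_, ?_, ?_, ?_, ?_, ?_⟩
  · constructor
    · rw [List.count_append, hI1.1, hI2.1]
      have h1 := Nat.mul_sub α k j
      have h2 := Nat.mul_le_mul_left α (le_of_lt hjk)
      omega
    · rw [List.count_append, hI1.2, hI2.2]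
      have h1 := Nat.mul_sub β k j
      have h2 := Nat.mul_le_mul_left β (le_of_lt hjk)
      omega
  · unfold FirstStep at hf1 ⊢
    rw [List.head?_append_of_ne_nil _ hq1ne]
    exact hf1
  · unfold LastStep at hl2 ⊢
    rw [List.getLast?_append, hl2]
    rfl
  · exact not_bounceFree_append hq hm hl1 hf2
  · exact leftBounces_append hbf hq hm hl1 hf2
  · exact rightBounces_append hbf hq hm hl1 hf2
  · exact (isB_append_junction hq hm c).mpr ⟨hl1, hf2⟩
  · intro i c' hB
    have := isB_set_append hbf hq hm hl1 hf2 c'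
    have hmem : i ∈ {i | IsB α β (q₁ ++ q₂) i c'} := hB
    rw [this] at hmem
    rcases hmem with h | ⟨i', _, rfl⟩
    · by_cases hc : c' = c <;> simp [hc] at h
      omega
    · exact le_trans (Nat.sub_le _ _) (Nat.le_add_right _ _)

/-- The master counting lemma: paths with at least one bounce decompose at the
first bounce. -/
lemma master (hα : 0 < α) (hβ : 0 < β) (hcop : Nat.Coprime α β)
    (a b : Bool) (k : ℕ) (C : ℕ → ℕ → Prop) :
    {p | InL α β k p ∧ FirstStep p a ∧ LastStep p b ∧ ¬ BounceFree α β p ∧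
        C (leftBounces α β p) (rightBounces α β p)}.ncard
    = ∑ jc ∈ (Finset.Ico 1 k) ×ˢ (Finset.univ : Finset Bool),
        {q | InL α β jc.1 q ∧ BounceFree α β q ∧ FirstStep q a ∧ LastStep q jc.2}.ncard *
        {q | InL α β (k - jc.1) q ∧ FirstStep q (!jc.2) ∧ LastStep q b ∧
            C (leftBounces α β q + jc.2.toNat) (rightBounces α β q + (!jc.2).toNat)}.ncard := by
  classical
  set Pre : ℕ → Bool → Set LatticePath := fun j c =>
    {q | InL α β j q ∧ BounceFree α β q ∧ FirstStep q a ∧ LastStep q c} with hPre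
  set Suf : ℕ → Bool → Set LatticePath := fun j c =>
    {q | InL α β (k - j) q ∧ FirstStep q (!c) ∧ LastStep q b ∧
        C (leftBounces α β q + c.toNat) (rightBounces α β q + (!c).toNat)} with hSuf
  set part : ℕ × Bool → Set LatticePath := fun jc =>
    (fun qq : LatticePath × LatticePath => qq.1 ++ qq.2) '' (Pre jc.1 jc.2 ×ˢ Suf jc.1 jc.2)
    with hpart
  -- membership spec for parts
  have part_spec : ∀ j c p, (j, c) ∈ (Finset.Ico 1 k) ×ˢ (Finset.univ : Finset Bool) →
      p ∈ part (j, c) →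
      (InL α β k p ∧ FirstStep p a ∧ LastStep p b ∧ ¬ BounceFree α β p ∧
        C (leftBounces α β p) (rightBounces α β p)) ∧
      IsB α β p ((α + β) * j - 1) c ∧
      (∀ i c', IsB α β p i c' → (α + β) * j - 1 ≤ i) := by
    rintro j c p hjc ⟨⟨q₁, q₂⟩, hq, rfl⟩
    simp only [Finset.mem_product, Finset.mem_Ico, Finset.mem_univ, and_true] at hjc
    obtain ⟨hq1, hq2⟩ := hq
    obtain ⟨hI1, hbf, hf1, hl1⟩ := hq1
    obtain ⟨hI2, hf2, hl2, hC⟩ := hq2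
    obtain ⟨g1, g2, g3, g4, g5, g6, g7, g8⟩ :=
      glue_spec hα hβ hjc.1 hjc.2 hI1 hbf hf1 hl1 hI2 hf2 hl2
    have hq1len : q₁.length = (α + β) * j := inL_length hI1
    refine ⟨⟨g1, g2, g3, g4, ?_⟩, ?_, ?_⟩
    · rw [g5, g6]; exact hC
    · rw [← hq1len]; exact g7
    · rw [← hq1len]; exact g8
  -- the target set is the union of the parts
  have hcover : {p | InL α β k p ∧ FirstStep p a ∧ LastStep p b ∧ ¬ BounceFree α β p ∧
      C (leftBounces α β p) (rightBounces α β p)}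
      = ⋃ jc ∈ (Finset.Ico 1 k) ×ˢ (Finset.univ : Finset Bool), part jc := by
    ext p
    simp only [Set.mem_setOf_eq, Set.mem_iUnion]
    constructor
    · rintro ⟨hI, hf, hl, hnb, hC⟩
      obtain ⟨j, c, hj1, hjk, hI1, hbf1, hlast, hI2, hhead⟩ :=
        first_bounce_split hα hβ hcop hI hnb
      set m := (α + β) * j with hm
      have happ : p.take m ++ p.drop m = p := List.take_append_drop m p
      have hq2ne : p.drop m ≠ [] := by
        apply List.ne_nil_of_length_pos
        rw [inL_length hI2]
        exact Nat.mul_pos (by omega) (by omega)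
      refine ⟨(j, c), by simp [Finset.mem_Ico]; omega, (p.take m, p.drop m), ⟨?_, ?_⟩, happ⟩
      · refine ⟨hI1, hbf1, ?_, hlast⟩
        unfold FirstStep at hf ⊢
        rw [← happ] at hf
        rw [List.head?_append_of_ne_nil _ (List.ne_nil_of_length_pos (by
          rw [inL_length hI1]; exact Nat.mul_pos (by omega) (by omega)))] at hf
        exact hf
      · refine ⟨hI2, hhead, ?_, ?_⟩
        · unfold LastStep at hl ⊢
          rw [← happ, List.getLast?_append] at hl
          obtain ⟨y, hy⟩ := Option.isSome_iff_exists.mp (List.getLast?_isSome.mpr hq2ne)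
          rw [hy] at hl ⊢
          exact hl
        · have hq : α * (p.take m).count false = β * (p.take m).count true := by
            rw [hI1.1, hI1.2]; ring
          have hm1 : 1 ≤ (p.take m).length := by
            rw [inL_length hI1]
            exact Nat.mul_pos (by omega) (by omega)
          have hlb := leftBounces_append hbf1 hq hm1 hlast hhead
          have hrb := rightBounces_append hbf1 hq hm1 hlast hhead
          rw [happ] at hlb hrb
          rw [← hlb, ← hrb]
          exact hC
    · rintro ⟨jc, hjc, hp⟩
      exact (part_spec jc.1 jc.2 p (by simpa using hjc) hp).1
  rw [hcover]
  rw [ncard_biUnion _ _ ?fin ?disj]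
  case fin =>
    intro jc _
    exact ((finite_paths_sub _).prod (finite_paths_sub _)).image _
  case disj =>
    rintro ⟨j, c⟩ hjc ⟨j', c'⟩ hjc' hne
    rw [Set.disjoint_left]
    intro p hp hp'
    obtain ⟨-, hB, hmin⟩ := part_spec j c p hjc hp
    obtain ⟨-, hB', hmin'⟩ := part_spec j' c' p hjc' hp'
    simp only [Finset.mem_product, Finset.mem_Ico, Finset.mem_univ, and_true] at hjc hjc'
    have h1 := hmin _ _ hB'
    have h2 := hmin' _ _ hB
    have hjj : (α + β) * j = (α + β) * j' := by
      have e1 : 0 < (α + β) * j := Nat.mul_pos (by omega) (by omega)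
      have e2 : 0 < (α + β) * j' := Nat.mul_pos (by omega) (by omega)
      omega
    have hj : j = j' := by
      have : 0 < α + β := by omega
      exact Nat.eq_of_mul_eq_mul_left this hjj
    subst hj
    have hcc : c = c' := by
      have e1 := hB.1
      have e2 := hB'.1
      rw [e1] at e2
      exact (Option.some.inj e2)
    exact hne (by rw [hcc])
  -- now compute each part's cardinality
  apply Finset.sum_congr rfl
  rintro ⟨j, c⟩ hjc
  simp only [Finset.mem_product, Finset.mem_Ico, Finset.mem_univ, and_true] at hjc
  have : part (j, c) = (fun qq : LatticePath × LatticePath => qq.1 ++ qq.2) ''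
      (Pre j c ×ˢ Suf j c) := rfl
  rw [this, Set.ncard_image_of_injOn, ncard_prod]
  rintro ⟨q₁, q₂⟩ hq ⟨q₁', q₂'⟩ hq' heq
  obtain ⟨h1, -⟩ := hq
  obtain ⟨h1', -⟩ := hq'
  have hlen : q₁.length = q₁'.length := by
    rw [inL_length h1.1, inL_length h1'.1]
  obtain ⟨e1, e2⟩ := List.append_inj heq hlen
  exact Prod.ext e1 e2

end S9
namespace S9

open Set List PowerSeries

variable {α β : ℕ}

/-- Bounce-free AB-path generating series. -/
noncomputable def bfSer (α β : ℕ) (a c : Bool) : PowerSeries ℚ :=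
  gfOf fun k => {p | InL α β k p ∧ BounceFree α β p ∧ FirstStep p a ∧ LastStep p c}

/-- All AB-path generating series. -/
noncomputable def pathSer (α β : ℕ) (a b : Bool) : PowerSeries ℚ :=
  gfOf fun k => {p | InL α β k p ∧ FirstStep p a ∧ LastStep p b}

lemma coeff_gfOf (S : ℕ → Set LatticePath) (k : ℕ) :
    PowerSeries.coeff k (gfOf S) = if k = 0 then 0 else ((S k).ncard : ℚ) := by
  rw [gfOf, PowerSeries.coeff_mk]

lemma coeff_gfOf_zero (S : ℕ → Set LatticePath) :
    PowerSeries.coeff 0 (gfOf S) = 0 := by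
  rw [coeff_gfOf, if_pos rfl]

lemma pathSer_tt (hα : 0 < α) (hβ : 0 < β) : pathSer α β true true = geeSer α β := by
  ext k
  rw [pathSer, coeff_gfOf, geeSer, PowerSeries.coeff_mk]
  rcases Nat.eq_zero_or_pos k with rfl | hk
  · simp
  · rw [if_neg (by omega), if_neg (by omega), ncard_paths_tt α β k hα hβ hk]

lemma pathSer_ff (hα : 0 < α) (hβ : 0 < β) : pathSer α β false false = gnnSer α β := by
  ext k
  rw [pathSer, coeff_gfOf, gnnSer, PowerSeries.coeff_mk]
  rcases Nat.eq_zero_or_pos k with rfl | hk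
  · simp
  · rw [if_neg (by omega), if_neg (by omega), ncard_paths_ff α β k hα hβ hk]

lemma pathSer_mixed (hα : 0 < α) (hβ : 0 < β) (a : Bool) :
    pathSer α β a (!a) = genSer α β := by
  ext k
  rw [pathSer, coeff_gfOf, genSer, PowerSeries.coeff_mk]
  rcases Nat.eq_zero_or_pos k with rfl | hk
  · simp
  · rw [if_neg (by omega), if_neg (by omega), ncard_paths_mixed α β k hα hβ hk a]

lemma coeff_mul_gf (φ ψ : PowerSeries ℚ) (hφ : PowerSeries.coeff 0 φ = 0)
    (hψ : PowerSeries.coeff 0 ψ = 0) (k : ℕ) :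
    PowerSeries.coeff k (φ * ψ)
      = ∑ j ∈ Finset.Ico 1 k, PowerSeries.coeff j φ * PowerSeries.coeff (k - j) ψ := by
  rw [PowerSeries.coeff_mul, Finset.Nat.sum_antidiagonal_eq_sum_range_succ_mk]
  rw [← Finset.sum_subset (s₁ := Finset.Ico 1 k) (by
    intro i hi
    simp only [Finset.mem_Ico] at hi
    simp only [Finset.mem_range]
    omega)]
  intro i hi hni
  simp only [Finset.mem_range] at hi
  simp only [Finset.mem_Ico] at hni
  rcases Nat.eq_zero_or_pos i with rfl | hipos
  · rw [hφ, zero_mul]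
  · have : i = k := by omega
    subst this
    rw [Nat.sub_self, hψ, mul_zero]

lemma bounceFree_iff_counts (p : LatticePath) :
    BounceFree α β p ↔ leftBounces α β p = 0 ∧ rightBounces α β p = 0 := by
  rw [bounceFree_iff_isB, leftBounces_eq, rightBounces_eq]
  constructor
  · intro h
    constructor <;>
      [rw [show {i | IsB α β p i true} = ∅ by ext i; simpa using h i true];
       rw [show {i | IsB α β p i false} = ∅ by ext i; simpa using h i false]] <;>
      simp
  · rintro ⟨h1, h2⟩ i c hB
    have e1 := (Set.ncard_eq_zero (finite_isB α β p true)).mp h1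
    have e2 := (Set.ncard_eq_zero (finite_isB α β p false)).mp h2
    cases c
    · have hmem : i ∈ {i | IsB α β p i false} := hB
      rw [e2] at hmem
      exact hmem
    · have hmem : i ∈ {i | IsB α β p i true} := hB
      rw [e1] at hmem
      exact hmem

/-- Splitting the count of AB-paths into the bounce-free ones and the rest. -/
lemma ncard_split_bf (k : ℕ) (a b : Bool) (C : ℕ → ℕ → Prop)
    (hC : C 0 0) :
    {p | InL α β k p ∧ FirstStep p a ∧ LastStep p b ∧
        C (leftBounces α β p) (rightBounces α β p)}.ncard
    = {p | InL α β k p ∧ BounceFree α β p ∧ FirstStep p a ∧ LastStep p b}.ncard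
      + {p | InL α β k p ∧ FirstStep p a ∧ LastStep p b ∧ ¬ BounceFree α β p ∧
          C (leftBounces α β p) (rightBounces α β p)}.ncard := by
  have hsplit : {p | InL α β k p ∧ FirstStep p a ∧ LastStep p b ∧
        C (leftBounces α β p) (rightBounces α β p)}
      = {p | InL α β k p ∧ BounceFree α β p ∧ FirstStep p a ∧ LastStep p b}
        ∪ {p | InL α β k p ∧ FirstStep p a ∧ LastStep p b ∧ ¬ BounceFree α β p ∧
            C (leftBounces α β p) (rightBounces α β p)} := by
    ext p
    simp only [Set.mem_setOf_eq, Set.mem_union]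
    constructor
    · rintro ⟨h1, h2, h3, h4⟩
      by_cases hbf : BounceFree α β p
      · exact Or.inl ⟨h1, hbf, h2, h3⟩
      · exact Or.inr ⟨h1, h2, h3, hbf, h4⟩
    · rintro (⟨h1, hbf, h2, h3⟩ | ⟨h1, h2, h3, h4, h5⟩)
      · obtain ⟨e1, e2⟩ := (bounceFree_iff_counts p).mp hbf
        exact ⟨h1, h2, h3, by rw [e1, e2]; exact hC⟩
      · exact ⟨h1, h2, h3, h5⟩
  rw [hsplit, Set.ncard_union_eq ?_ ?_ ?_]
  · rw [Set.disjoint_left]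
    rintro p ⟨-, hbf, -⟩ ⟨-, -, -, hnbf, -⟩
    exact hnbf hbf
  · exact finite_paths_sub _
  · exact finite_paths_sub _

lemma coeff_bfSer_zero (a c : Bool) : PowerSeries.coeff 0 (bfSer α β a c) = 0 :=
  coeff_gfOf_zero _

lemma coeff_pathSer_zero (a b : Bool) : PowerSeries.coeff 0 (pathSer α β a b) = 0 :=
  coeff_gfOf_zero _

/-- The unweighted first-bounce recursion, as an identity of power series. -/
lemma pathSer_rec (hα : 0 < α) (hβ : 0 < β) (hcop : Nat.Coprime α β) (a b : Bool) :
    pathSer α β a b = bfSer α β a b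
      + bfSer α β a true * pathSer α β false b
      + bfSer α β a false * pathSer α β true b := by
  ext k
  rw [map_add, map_add,
    coeff_mul_gf (bfSer α β a true) (pathSer α β false b)
      (coeff_bfSer_zero _ _) (coeff_pathSer_zero _ _),
    coeff_mul_gf (bfSer α β a false) (pathSer α β true b)
      (coeff_bfSer_zero _ _) (coeff_pathSer_zero _ _)]
  rcases Nat.eq_zero_or_pos k with rfl | hk
  · simp [coeff_pathSer_zero, coeff_bfSer_zero]
  rw [pathSer, bfSer, coeff_gfOf, coeff_gfOf, if_neg (by omega), if_neg (by omega)]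
  have hL : {p | InL α β k p ∧ FirstStep p a ∧ LastStep p b}
      = {p | InL α β k p ∧ FirstStep p a ∧ LastStep p b ∧
          (fun _ _ : ℕ => True) (leftBounces α β p) (rightBounces α β p)} := by
    ext p; simp
  rw [hL, ncard_split_bf k a b (fun _ _ => True) trivial,
    master hα hβ hcop a b k (fun _ _ => True)]
  have hSsum : ((∑ jc ∈ (Finset.Ico 1 k) ×ˢ (Finset.univ : Finset Bool),
      {q | InL α β jc.1 q ∧ BounceFree α β q ∧ FirstStep q a ∧ LastStep q jc.2}.ncard *
      {q | InL α β (k - jc.1) q ∧ FirstStep q (!jc.2) ∧ LastStep q b ∧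
          (fun _ _ : ℕ => True) (leftBounces α β q + jc.2.toNat)
            (rightBounces α β q + (!jc.2).toNat)}.ncard : ℕ) : ℚ)
      = (∑ j ∈ Finset.Ico 1 k, PowerSeries.coeff j (bfSer α β a true) *
          PowerSeries.coeff (k - j) (pathSer α β false b))
        + (∑ j ∈ Finset.Ico 1 k, PowerSeries.coeff j (bfSer α β a false) *
          PowerSeries.coeff (k - j) (pathSer α β true b)) := by
    rw [Nat.cast_sum, Finset.sum_product, ← Finset.sum_add_distrib]
    refine Finset.sum_congr rfl ?_
    intro j hj
    simp only [Finset.mem_Ico] at hj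
    rw [Fintype.sum_bool]
    simp only [Bool.not_true, Bool.not_false, Bool.toNat_true, Bool.toNat_false, and_true]
    rw [bfSer, bfSer, pathSer, pathSer, coeff_gfOf, coeff_gfOf, coeff_gfOf, coeff_gfOf,
      if_neg (by omega), if_neg (by omega), if_neg (by omega), if_neg (by omega)]
    push_cast
    ring
  rw [Nat.cast_add, hSsum]
  ring

end S9
namespace S9

open Set List

/-! ### `toMv` toolbox -/

lemma coeff_toMv (φ : PowerSeries ℚ) (d : Fin 3 →₀ ℕ) :
    MvPowerSeries.coeff d (toMv φ)
      = if d 1 = 0 ∧ d 2 = 0 then PowerSeries.coeff (d 0) φ else 0 := rfl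

lemma toMv_add (φ ψ : PowerSeries ℚ) : toMv (φ + ψ) = toMv φ + toMv ψ := by
  ext d
  rw [map_add, coeff_toMv, coeff_toMv, coeff_toMv, map_add]
  by_cases h : d 1 = 0 ∧ d 2 = 0 <;> simp [h]

lemma toMv_sub (φ ψ : PowerSeries ℚ) : toMv (φ - ψ) = toMv φ - toMv ψ := by
  ext d
  rw [map_sub, coeff_toMv, coeff_toMv, coeff_toMv, map_sub]
  by_cases h : d 1 = 0 ∧ d 2 = 0 <;> simp [h]

lemma toMv_one : toMv 1 = (1 : MvPowerSeries (Fin 3) ℚ) := by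
  ext d
  rw [coeff_toMv, MvPowerSeries.coeff_one, PowerSeries.coeff_one]
  by_cases h : d 1 = 0 ∧ d 2 = 0
  · rw [if_pos h]
    by_cases h0 : d 0 = 0
    · rw [if_pos h0, if_pos]
      ext i
      fin_cases i <;> simp [h0, h.1, h.2]
    · rw [if_neg h0, if_neg]
      intro hd
      apply h0
      rw [hd]
      rfl
  · rw [if_neg h, if_neg]
    intro hd
    apply h
    rw [hd]
    exact ⟨rfl, rfl⟩

lemma single_le_d {d : Fin 3 →₀ ℕ} {j : ℕ} (hj : j ≤ d 0) :
    Finsupp.single (0 : Fin 3) j + (d - Finsupp.single 0 j) = d := by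
  ext i
  rcases eq_or_ne i 0 with rfl | hi
  · simp [Finsupp.single_apply]
    omega
  · simp [Finsupp.single_apply, Ne.symm hi]

lemma coeff_toMv_mul (φ : PowerSeries ℚ) (M : MvPowerSeries (Fin 3) ℚ) (d : Fin 3 →₀ ℕ) :
    MvPowerSeries.coeff d (toMv φ * M)
      = ∑ j ∈ Finset.range (d 0 + 1),
          PowerSeries.coeff j φ *
            MvPowerSeries.coeff (d - Finsupp.single 0 j) M := by
  classical
  rw [MvPowerSeries.coeff_mul]
  rw [← Finset.sum_filter_add_sum_filter_not _ (fun uv => uv.1 1 = 0 ∧ uv.1 2 = 0)]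
  have h2 : ∑ uv ∈ Finset.filter (fun uv => ¬(uv.1 1 = 0 ∧ uv.1 2 = 0))
      (Finset.HasAntidiagonal.antidiagonal d),
      MvPowerSeries.coeff uv.1 (toMv φ) * MvPowerSeries.coeff uv.2 M = 0 := by
    apply Finset.sum_eq_zero
    intro uv huv
    simp only [Finset.mem_filter] at huv
    rw [coeff_toMv, if_neg huv.2, zero_mul]
  rw [h2, add_zero]
  refine Finset.sum_bij' (i := fun uv _ => uv.1 0)
    (j := fun j _ => (Finsupp.single 0 j, d - Finsupp.single 0 j)) ?_ ?_ ?_ ?_ ?_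
  · intro uv huv
    simp only [Finset.mem_filter, Finset.HasAntidiagonal.mem_antidiagonal] at huv
    simp only [Finset.mem_range]
    have : uv.1 0 + uv.2 0 = d 0 := by
      rw [← Finsupp.add_apply, huv.1]
    omega
  · intro j hj
    simp only [Finset.mem_range] at hj
    simp only [Finset.mem_filter, Finset.HasAntidiagonal.mem_antidiagonal]
    refine ⟨single_le_d (by omega), ?_, ?_⟩ <;> simp [Finsupp.single_apply]
  · intro uv huv
    simp only [Finset.mem_filter, Finset.HasAntidiagonal.mem_antidiagonal] at huv
    have hu : uv.1 = Finsupp.single 0 (uv.1 0) := by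
      ext i
      rcases eq_or_ne i 0 with rfl | hi
      · simp [Finsupp.single_apply]
      · rw [Finsupp.single_apply, if_neg (Ne.symm hi)]
        fin_cases i
        · simp at hi
        · exact huv.2.1
        · exact huv.2.2
    have hv : uv.2 = d - Finsupp.single 0 (uv.1 0) := by
      rw [← hu, ← huv.1]
      ext i
      simp
    rw [Prod.ext_iff]
    exact ⟨hu.symm, hv.symm⟩
  · intro j hj
    simp [Finsupp.single_apply]
  · intro uv huv
    simp only [Finset.mem_filter, Finset.HasAntidiagonal.mem_antidiagonal] at huv
    have hu1 : ∀ i : Fin 3, i ≠ 0 → uv.1 i = 0 := by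
      intro i hi
      fin_cases i
      · simp at hi
      · exact huv.2.1
      · exact huv.2.2
    have hv : uv.2 = d - Finsupp.single 0 (uv.1 0) := by
      ext i
      have hadd : uv.1 i + uv.2 i = d i := by rw [← Finsupp.add_apply, huv.1]
      rcases eq_or_ne i 0 with rfl | hi
      · simp only [Finsupp.coe_tsub, Pi.sub_apply, Finsupp.single_apply,
          if_pos rfl, eq_self_iff_true, if_true]
        omega
      · rw [hu1 i hi] at hadd
        simp only [Finsupp.coe_tsub, Pi.sub_apply, Finsupp.single_apply,
          if_neg (Ne.symm hi)]
        omega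
    rw [coeff_toMv, if_pos huv.2, hv]

lemma toMv_mul (φ ψ : PowerSeries ℚ) : toMv (φ * ψ) = toMv φ * toMv ψ := by
  ext d
  rw [coeff_toMv_mul, coeff_toMv]
  by_cases h : d 1 = 0 ∧ d 2 = 0
  · rw [if_pos h]
    rw [PowerSeries.coeff_mul, Finset.Nat.sum_antidiagonal_eq_sum_range_succ_mk]
    apply Finset.sum_congr rfl
    intro j hj
    simp only [Finset.mem_range] at hj
    rw [coeff_toMv, if_pos (by simp [h.1, h.2, Finsupp.single_apply])]
    congr 2
    simp
  · rw [if_neg h]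
    symm
    apply Finset.sum_eq_zero
    intro j hj
    rw [coeff_toMv, if_neg, mul_zero]
    intro hcon
    apply h
    have e1 := hcon.1
    have e2 := hcon.2
    simp only [Finsupp.coe_tsub, Pi.sub_apply, Finsupp.single_apply] at e1 e2
    norm_num at e1 e2
    exact ⟨e1, e2⟩

lemma coeff_X_mul' (i : Fin 3) (M : MvPowerSeries (Fin 3) ℚ) (d : Fin 3 →₀ ℕ) :
    MvPowerSeries.coeff d (MvPowerSeries.X i * M)
      = if d i = 0 then 0 else MvPowerSeries.coeff (d - Finsupp.single i 1) M := by
  classical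
  rw [MvPowerSeries.coeff_mul]
  by_cases hd : d i = 0
  · rw [if_pos hd]
    apply Finset.sum_eq_zero
    intro uv huv
    simp only [Finset.HasAntidiagonal.mem_antidiagonal] at huv
    rw [MvPowerSeries.coeff_X]
    rw [if_neg, zero_mul]
    intro hcon
    have : uv.1 i + uv.2 i = d i := by rw [← Finsupp.add_apply, huv]
    rw [hcon] at this
    simp [Finsupp.single_apply] at this
    omega
  · rw [if_neg hd]
    rw [Finset.sum_eq_single (Finsupp.single i 1, d - Finsupp.single i 1)]
    · rw [MvPowerSeries.coeff_X, if_pos rfl, one_mul]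
    · intro uv huv hne
      rw [MvPowerSeries.coeff_X]
      rw [if_neg, zero_mul]
      intro hcon
      apply hne
      simp only [Finset.HasAntidiagonal.mem_antidiagonal] at huv
      have hv : uv.2 = d - Finsupp.single i 1 := by
        rw [← huv, hcon]
        ext x
        simp
      rw [Prod.ext_iff]
      exact ⟨hcon, hv⟩
    · intro hcon
      exfalso
      apply hcon
      simp only [Finset.HasAntidiagonal.mem_antidiagonal]
      ext x
      rcases eq_or_ne x i with rfl | hx
      · simp [Finsupp.single_apply]
        omega
      · simp [Finsupp.single_apply, Ne.symm hx]

lemma constantCoeff_toMv (φ : PowerSeries ℚ) :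
    MvPowerSeries.constantCoeff (toMv φ) = PowerSeries.coeff 0 φ := by
  rw [← MvPowerSeries.coeff_zero_eq_constantCoeff, coeff_toMv]
  simp

end S9
namespace S9

open Set List

variable {α β : ℕ}

lemma coeff_G3ab (α β : ℕ) (a b : Bool) (d : Fin 3 →₀ ℕ) :
    MvPowerSeries.coeff d (G3ab α β a b)
      = if d 0 = 0 then 0 else
          (({p | InL α β (d 0) p ∧ FirstStep p a ∧ LastStep p b ∧
              leftBounces α β p = d 1 ∧ rightBounces α β p = d 2}).ncard : ℚ) := rfl

lemma ncard_split_bf2 (k : ℕ) (a b : Bool) (C : ℕ → ℕ → Prop) :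
    {p | InL α β k p ∧ FirstStep p a ∧ LastStep p b ∧
        C (leftBounces α β p) (rightBounces α β p)}.ncard
    = {p | (InL α β k p ∧ BounceFree α β p ∧ FirstStep p a ∧ LastStep p b) ∧ C 0 0}.ncard
      + {p | InL α β k p ∧ FirstStep p a ∧ LastStep p b ∧ ¬ BounceFree α β p ∧
          C (leftBounces α β p) (rightBounces α β p)}.ncard := by
  have hsplit : {p | InL α β k p ∧ FirstStep p a ∧ LastStep p b ∧
        C (leftBounces α β p) (rightBounces α β p)}
      = {p | (InL α β k p ∧ BounceFree α β p ∧ FirstStep p a ∧ LastStep p b) ∧ C 0 0}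
        ∪ {p | InL α β k p ∧ FirstStep p a ∧ LastStep p b ∧ ¬ BounceFree α β p ∧
            C (leftBounces α β p) (rightBounces α β p)} := by
    ext p
    simp only [Set.mem_setOf_eq, Set.mem_union]
    constructor
    · rintro ⟨h1, h2, h3, h4⟩
      by_cases hbf : BounceFree α β p
      · obtain ⟨e1, e2⟩ := (bounceFree_iff_counts p).mp hbf
        rw [e1, e2] at h4
        exact Or.inl ⟨⟨h1, hbf, h2, h3⟩, h4⟩
      · exact Or.inr ⟨h1, h2, h3, hbf, h4⟩
    · rintro (⟨⟨h1, hbf, h2, h3⟩, hc⟩ | ⟨h1, h2, h3, h4, h5⟩)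
      · obtain ⟨e1, e2⟩ := (bounceFree_iff_counts p).mp hbf
        exact ⟨h1, h2, h3, by rw [e1, e2]; exact hc⟩
      · exact ⟨h1, h2, h3, h5⟩
  rw [hsplit, Set.ncard_union_eq ?_ ?_ ?_]
  · rw [Set.disjoint_left]
    rintro p ⟨⟨-, hbf, -⟩, -⟩ ⟨-, -, -, hnbf, -⟩
    exact hnbf hbf
  · exact (finite_paths_sub (fun p => BounceFree α β p ∧ FirstStep p a ∧ LastStep p b)).subset
      (by rintro p ⟨h, -⟩; exact h)
  · exact finite_paths_sub _

lemma coeff_svar_term (a b : Bool) (d : Fin 3 →₀ ℕ) :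
    MvPowerSeries.coeff d (sVar * (toMv (bfSer α β a true) * G3ab α β false b))
      = ∑ j ∈ Finset.Ico 1 (d 0),
          ({p | InL α β j p ∧ BounceFree α β p ∧ FirstStep p a ∧ LastStep p true}.ncard : ℚ)
          * ({q | InL α β (d 0 - j) q ∧ FirstStep q false ∧ LastStep q b ∧
              leftBounces α β q + 1 = d 1 ∧ rightBounces α β q = d 2}.ncard : ℚ) := by
  rw [sVar, coeff_X_mul' 1]
  by_cases hl : d 1 = 0
  · rw [if_pos hl]
    symm
    apply Finset.sum_eq_zero
    intro j hj
    have he : {q | InL α β (d 0 - j) q ∧ FirstStep q false ∧ LastStep q b ∧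
        leftBounces α β q + 1 = d 1 ∧ rightBounces α β q = d 2} = ∅ := by
      ext q
      simp only [Set.mem_setOf_eq, Set.mem_empty_iff_false, iff_false]
      rintro ⟨-, -, -, h4, -⟩
      omega
    rw [he]
    simp
  · rw [if_neg hl, coeff_toMv_mul]
    have h0 : ((d - Finsupp.single 1 1 : Fin 3 →₀ ℕ)) 0 = d 0 := by
      simp [Finsupp.single_apply]
    rw [h0]
    rw [← Finset.sum_subset (s₁ := Finset.Ico 1 (d 0)) (by
      intro i hi
      simp only [Finset.mem_Ico] at hi
      simp only [Finset.mem_range]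
      omega) ?van]
    case van =>
      intro j hj hnj
      simp only [Finset.mem_range] at hj
      simp only [Finset.mem_Ico] at hnj
      rcases Nat.eq_zero_or_pos j with rfl | hjpos
      · rw [coeff_bfSer_zero, zero_mul]
      · have hjd : j = d 0 := by omega
        rw [coeff_G3ab]
        rw [if_pos, mul_zero]
        simp [Finsupp.single_apply, hjd]
    apply Finset.sum_congr rfl
    intro j hj
    simp only [Finset.mem_Ico] at hj
    rw [bfSer, coeff_gfOf, if_neg (by omega), coeff_G3ab]
    have he0 : ((d - Finsupp.single 1 1 - Finsupp.single 0 j : Fin 3 →₀ ℕ)) 0 = d 0 - j := by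
      simp [Finsupp.single_apply]
    have he1 : ((d - Finsupp.single 1 1 - Finsupp.single 0 j : Fin 3 →₀ ℕ)) 1 = d 1 - 1 := by
      simp [Finsupp.single_apply]
    have he2 : ((d - Finsupp.single 1 1 - Finsupp.single 0 j : Fin 3 →₀ ℕ)) 2 = d 2 := by
      simp [Finsupp.single_apply]
    rw [he0, he1, he2, if_neg (by omega)]
    have hset : {q | InL α β (d 0 - j) q ∧ FirstStep q false ∧ LastStep q b ∧
        leftBounces α β q = d 1 - 1 ∧ rightBounces α β q = d 2}
        = {q | InL α β (d 0 - j) q ∧ FirstStep q false ∧ LastStep q b ∧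
            leftBounces α β q + 1 = d 1 ∧ rightBounces α β q = d 2} := by
      ext q
      simp only [Set.mem_setOf_eq]
      constructor
      · rintro ⟨a1, a2, a3, a4, a5⟩
        exact ⟨a1, a2, a3, by omega, a5⟩
      · rintro ⟨a1, a2, a3, a4, a5⟩
        exact ⟨a1, a2, a3, by omega, a5⟩
    rw [hset]

lemma coeff_tvar_term (a b : Bool) (d : Fin 3 →₀ ℕ) :
    MvPowerSeries.coeff d (tVar * (toMv (bfSer α β a false) * G3ab α β true b))
      = ∑ j ∈ Finset.Ico 1 (d 0),
          ({p | InL α β j p ∧ BounceFree α β p ∧ FirstStep p a ∧ LastStep p false}.ncard : ℚ)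
          * ({q | InL α β (d 0 - j) q ∧ FirstStep q true ∧ LastStep q b ∧
              leftBounces α β q = d 1 ∧ rightBounces α β q + 1 = d 2}.ncard : ℚ) := by
  rw [tVar, coeff_X_mul' 2]
  by_cases hl : d 2 = 0
  · rw [if_pos hl]
    symm
    apply Finset.sum_eq_zero
    intro j hj
    have he : {q | InL α β (d 0 - j) q ∧ FirstStep q true ∧ LastStep q b ∧
        leftBounces α β q = d 1 ∧ rightBounces α β q + 1 = d 2} = ∅ := by
      ext q
      simp only [Set.mem_setOf_eq, Set.mem_empty_iff_false, iff_false]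
      rintro ⟨-, -, -, -, h5⟩
      omega
    rw [he]
    simp
  · rw [if_neg hl, coeff_toMv_mul]
    have h0 : ((d - Finsupp.single 2 1 : Fin 3 →₀ ℕ)) 0 = d 0 := by
      simp [Finsupp.single_apply]
    rw [h0]
    rw [← Finset.sum_subset (s₁ := Finset.Ico 1 (d 0)) (by
      intro i hi
      simp only [Finset.mem_Ico] at hi
      simp only [Finset.mem_range]
      omega) ?van]
    case van =>
      intro j hj hnj
      simp only [Finset.mem_range] at hj
      simp only [Finset.mem_Ico] at hnj
      rcases Nat.eq_zero_or_pos j with rfl | hjpos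
      · rw [coeff_bfSer_zero, zero_mul]
      · have hjd : j = d 0 := by omega
        rw [coeff_G3ab]
        rw [if_pos, mul_zero]
        simp [Finsupp.single_apply, hjd]
    apply Finset.sum_congr rfl
    intro j hj
    simp only [Finset.mem_Ico] at hj
    rw [bfSer, coeff_gfOf, if_neg (by omega), coeff_G3ab]
    have he0 : ((d - Finsupp.single 2 1 - Finsupp.single 0 j : Fin 3 →₀ ℕ)) 0 = d 0 - j := by
      simp [Finsupp.single_apply]
    have he1 : ((d - Finsupp.single 2 1 - Finsupp.single 0 j : Fin 3 →₀ ℕ)) 1 = d 1 := by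
      simp [Finsupp.single_apply]
    have he2 : ((d - Finsupp.single 2 1 - Finsupp.single 0 j : Fin 3 →₀ ℕ)) 2 = d 2 - 1 := by
      simp [Finsupp.single_apply]
    rw [he0, he1, he2, if_neg (by omega)]
    have hset : {q | InL α β (d 0 - j) q ∧ FirstStep q true ∧ LastStep q b ∧
        leftBounces α β q = d 1 ∧ rightBounces α β q = d 2 - 1}
        = {q | InL α β (d 0 - j) q ∧ FirstStep q true ∧ LastStep q b ∧
            leftBounces α β q = d 1 ∧ rightBounces α β q + 1 = d 2} := by
      ext q
      simp only [Set.mem_setOf_eq]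
      constructor
      · rintro ⟨a1, a2, a3, a4, a5⟩
        exact ⟨a1, a2, a3, a4, by omega⟩
      · rintro ⟨a1, a2, a3, a4, a5⟩
        exact ⟨a1, a2, a3, a4, by omega⟩
    rw [hset]

/-- The weighted first-bounce recursion for the trivariate series. -/
lemma G3ab_rec (hα : 0 < α) (hβ : 0 < β) (hcop : Nat.Coprime α β) (a b : Bool) :
    G3ab α β a b = toMv (bfSer α β a b)
      + sVar * (toMv (bfSer α β a true) * G3ab α β false b)
      + tVar * (toMv (bfSer α β a false) * G3ab α β true b) := by
  ext d
  rw [map_add, map_add, coeff_svar_term, coeff_tvar_term, coeff_G3ab, coeff_toMv]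
  rcases Nat.eq_zero_or_pos (d 0) with h0 | h0
  · rw [if_pos h0]
    have e1 : ∀ j, j ∈ Finset.Ico 1 (d 0) → False := by
      intro j hj
      simp only [Finset.mem_Ico] at hj
      omega
    rw [Finset.Ico_eq_empty (by omega), Finset.sum_empty, Finset.sum_empty]
    rw [bfSer, coeff_gfOf, if_pos h0]
    by_cases h12 : d 1 = 0 ∧ d 2 = 0 <;> simp [h12]
  rw [if_neg (by omega)]
  -- combinatorial identity
  have hC := ncard_split_bf2 (α := α) (β := β) (d 0) a b
    (fun l r => l = d 1 ∧ r = d 2)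
  have hmain := master hα hβ hcop a b (d 0) (fun l r => l = d 1 ∧ r = d 2)
  have hLHS : {p | InL α β (d 0) p ∧ FirstStep p a ∧ LastStep p b ∧
      leftBounces α β p = d 1 ∧ rightBounces α β p = d 2}
      = {p | InL α β (d 0) p ∧ FirstStep p a ∧ LastStep p b ∧
        (fun l r => l = d 1 ∧ r = d 2) (leftBounces α β p) (rightBounces α β p)} := rfl
  rw [hLHS, hC, hmain, Nat.cast_add]
  -- first term
  have hT0 : (({p | (InL α β (d 0) p ∧ BounceFree α β p ∧ FirstStep p a ∧ LastStep p b) ∧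
      (0 = d 1 ∧ 0 = d 2)}.ncard : ℕ) : ℚ)
      = if d 1 = 0 ∧ d 2 = 0 then
          PowerSeries.coeff (d 0) (bfSer α β a b) else 0 := by
    by_cases h12 : d 1 = 0 ∧ d 2 = 0
    · rw [if_pos h12]
      rw [bfSer, coeff_gfOf, if_neg (by omega)]
      congr 2
      ext p
      simp only [Set.mem_setOf_eq]
      constructor
      · rintro ⟨h, -⟩; exact h
      · intro h; exact ⟨h, h12.1.symm, h12.2.symm⟩
    · rw [if_neg h12]
      have hemp : {p | (InL α β (d 0) p ∧ BounceFree α β p ∧ FirstStep p a ∧ LastStep p b) ∧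
          (0 = d 1 ∧ 0 = d 2)} = ∅ := by
        ext p
        simp only [Set.mem_setOf_eq, Set.mem_empty_iff_false, iff_false]
        rintro ⟨-, h1, h2⟩
        exact h12 ⟨h1.symm, h2.symm⟩
      rw [hemp]
      simp
  have hSsum : ((∑ jc ∈ (Finset.Ico 1 (d 0)) ×ˢ (Finset.univ : Finset Bool),
      {q | InL α β jc.1 q ∧ BounceFree α β q ∧ FirstStep q a ∧ LastStep q jc.2}.ncard *
      {q | InL α β (d 0 - jc.1) q ∧ FirstStep q (!jc.2) ∧ LastStep q b ∧
          leftBounces α β q + jc.2.toNat = d 1 ∧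
          rightBounces α β q + (!jc.2).toNat = d 2}.ncard : ℕ) : ℚ)
      = (∑ j ∈ Finset.Ico 1 (d 0),
          ({p | InL α β j p ∧ BounceFree α β p ∧ FirstStep p a ∧ LastStep p true}.ncard : ℚ)
          * ({q | InL α β (d 0 - j) q ∧ FirstStep q false ∧ LastStep q b ∧
              leftBounces α β q + 1 = d 1 ∧ rightBounces α β q = d 2}.ncard : ℚ))
        + (∑ j ∈ Finset.Ico 1 (d 0),
          ({p | InL α β j p ∧ BounceFree α β p ∧ FirstStep p a ∧ LastStep p false}.ncard : ℚ)
          * ({q | InL α β (d 0 - j) q ∧ FirstStep q true ∧ LastStep q b ∧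
              leftBounces α β q = d 1 ∧ rightBounces α β q + 1 = d 2}.ncard : ℚ)) := by
    rw [Nat.cast_sum, Finset.sum_product, ← Finset.sum_add_distrib]
    refine Finset.sum_congr rfl ?_
    intro j hj
    rw [Fintype.sum_bool]
    simp only [Bool.not_true, Bool.not_false, Bool.toNat_true, Bool.toNat_false]
    have e1 : {q | InL α β (d 0 - j) q ∧ FirstStep q false ∧ LastStep q b ∧
        leftBounces α β q + 1 = d 1 ∧ rightBounces α β q + 0 = d 2}
        = {q | InL α β (d 0 - j) q ∧ FirstStep q false ∧ LastStep q b ∧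
            leftBounces α β q + 1 = d 1 ∧ rightBounces α β q = d 2} := by
      ext q
      simp only [Set.mem_setOf_eq, Nat.add_zero]
    have e2 : {q | InL α β (d 0 - j) q ∧ FirstStep q true ∧ LastStep q b ∧
        leftBounces α β q + 0 = d 1 ∧ rightBounces α β q + 1 = d 2}
        = {q | InL α β (d 0 - j) q ∧ FirstStep q true ∧ LastStep q b ∧
            leftBounces α β q = d 1 ∧ rightBounces α β q + 1 = d 2} := by
      ext q
      simp only [Set.mem_setOf_eq, Nat.add_zero]
    rw [e1, e2]
    push_cast
    ring
  rw [hT0, hSsum]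
  ring

end S9
open S9

/-- In `ℚ[[x,s,t]]`, `G_ee(x,s,t)·D = g_ee(x)` and
`G_nn(x,s,t)·D = g_nn(x)`. -/
theorem statement9 (α β : ℕ) (hα : 0 < α) (hβ : 0 < β) (hcop : Nat.Coprime α β) :
    G3ab α β true true * D3 α β = toMv (geeSer α β) ∧
    G3ab α β false false * D3 α β = toMv (gnnSer α β) := by
  have hptt : pathSer α β true true = geeSer α β := pathSer_tt hα hβ
  have hpff : pathSer α β false false = gnnSer α β := pathSer_ff hα hβ
  have hptf : pathSer α β true false = genSer α β := pathSer_mixed hα hβ true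
  have hpft : pathSer α β false true = genSer α β := pathSer_mixed hα hβ false
  have hB1 := pathSer_rec hα hβ hcop true true
  have hB2 := pathSer_rec hα hβ hcop false true
  have hB3 := pathSer_rec hα hβ hcop true false
  have hB4 := pathSer_rec hα hβ hcop false false
  rw [hptt, hpft] at hB1
  rw [hpft, hptt] at hB2
  rw [hptf, hpff] at hB3
  rw [hpff, hptf] at hB4
  -- map to MvPowerSeries
  have tB1 := congrArg toMv hB1
  have tB2 := congrArg toMv hB2
  have tB3 := congrArg toMv hB3
  have tB4 := congrArg toMv hB4
  rw [toMv_add, toMv_add, toMv_mul, toMv_mul] at tB1 tB2 tB3 tB4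
  have hA1 := G3ab_rec hα hβ hcop true true
  have hA2 := G3ab_rec hα hβ hcop false true
  have hA3 := G3ab_rec hα hβ hcop true false
  have hA4 := G3ab_rec hα hβ hcop false false
  set s := sVar with hs
  set t := tVar with ht
  set a' := toMv (bfSer α β true true) with ha'
  set b' := toMv (bfSer α β true false) with hb'
  set c' := toMv (bfSer α β false true) with hc'
  set d' := toMv (bfSer α β false false) with hd'
  set gE := toMv (geeSer α β) with hgE
  set gM := toMv (genSer α β) with hgM
  set gN := toMv (gnnSer α β) with hgN
  set Gee := G3ab α β true true with hGeedef
  set Gne := G3ab α β false true with hGnedef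
  set Gen := G3ab α β true false with hGendef
  set Gnn := G3ab α β false false with hGnndef
  -- c' = b'
  have hgen1 : ((1 - b') * (1 - c') - a' * d') * gM = b' - b' * c' + a' * d' := by
    linear_combination (1 - c') * tB3 + a' * tB4
  have hgne1 : ((1 - b') * (1 - c') - a' * d') * gM = c' - b' * c' + a' * d' := by
    linear_combination d' * tB1 + (1 - b') * tB2
  have hbc : b' = c' := by linear_combination hgne1 - hgen1
  rw [← hbc] at tB2 tB4 hA2 hA4
  -- the E-equations
  have hgee : ((1 - b') * (1 - b') - a' * d') * gE = a' := by
    linear_combination (1 - b') * tB1 + a' * tB2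
  have hgnn : ((1 - b') * (1 - b') - a' * d') * gN = d' := by
    linear_combination d' * tB3 + (1 - b') * tB4
  have hgen : ((1 - b') * (1 - b') - a' * d') * gM = b' - b' * b' + a' * d' := by
    rw [← hbc] at hgen1
    exact hgen1
  -- the Δ-equations
  have hDG1 : ((1 - t * b') * (1 - s * b') - s * t * (a' * d')) * Gee = a' := by
    linear_combination (1 - s * b') * hA1 + s * a' * hA2
  have hDG2 : ((1 - t * b') * (1 - s * b') - s * t * (a' * d')) * Gnn = d' := by
    linear_combination t * d' * hA3 + (1 - t * b') * hA4
  -- E is a unit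
  have hE0 : MvPowerSeries.constantCoeff ((1 - b') * (1 - b') - a' * d') = 1 := by
    rw [ha', hb', hd']
    simp [map_sub, map_mul, map_one, constantCoeff_toMv, coeff_bfSer_zero]
  have hEu : IsUnit ((1 - b') * (1 - b') - a' * d') :=
    MvPowerSeries.isUnit_iff_constantCoeff.mpr (by rw [hE0]; exact isUnit_one)
  have hEu2 : IsUnit (((1 - b') * (1 - b') - a' * d') ^ 2) := hEu.pow 2
  constructor
  · have key : ((1 - b') * (1 - b') - a' * d') ^ 2 * (Gee * D3 α β)
        = ((1 - b') * (1 - b') - a' * d') ^ 2 * gE := by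
      unfold D3
      rw [← hs, ← ht, ← hgM, ← hgE, ← hgN]
      linear_combination
        ((2 - s - t) * ((1 - b') * (1 - b') - a' * d') * Gee
          + (1 - s) * (1 - t) * (((1 - b') * (1 - b') - a' * d') * gM
              + (b' - b' * b' + a' * d')) * Gee) * hgen
        + (-((1 - s) * (1 - t)) * ((1 - b') * (1 - b') - a' * d') * gN * Gee
            - ((1 - b') * (1 - b') - a' * d')) * hgee
        + (-((1 - s) * (1 - t)) * a' * Gee) * hgnn
        + ((1 - b') * (1 - b') - a' * d') * hDG1
    exact hEu2.mul_left_cancel key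
  · have key : ((1 - b') * (1 - b') - a' * d') ^ 2 * (Gnn * D3 α β)
        = ((1 - b') * (1 - b') - a' * d') ^ 2 * gN := by
      unfold D3
      rw [← hs, ← ht, ← hgM, ← hgE, ← hgN]
      linear_combination
        ((2 - s - t) * ((1 - b') * (1 - b') - a' * d') * Gnn
          + (1 - s) * (1 - t) * (((1 - b') * (1 - b') - a' * d') * gM
              + (b' - b' * b' + a' * d')) * Gnn) * hgen
        + (-((1 - s) * (1 - t)) * ((1 - b') * (1 - b') - a' * d') * gN * Gnn) * hgee
        + (-((1 - s) * (1 - t)) * a' * Gnn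
            - ((1 - b') * (1 - b') - a' * d')) * hgnn
        + ((1 - b') * (1 - b') - a' * d') * hDG2
    exact hEu2.mul_left_cancel key
end

section
/- In the ring of formal power series in the three variables x, s, t over ℚ, with D = 1 + (2−s−t)·g_en(x) + (1−s)·(1−t)·(g_en(x)² − g_ee(x)·g_nn(x)), the series G_en(x,s,t) = Σ_{k≥1} Σ_{ℓ,r≥0} b^{en}_{ℓ,r}(k)·x^k·s^ℓ·t^r and G_ne(x,s,t) = Σ_{k≥1} Σ_{ℓ,r≥0} b^{ne}_{ℓ,r}(k)·x^k·s^ℓ·t^r satisfy G_en(x,s,t)·D = g_en(x) + (1−s)·(g_en(x)² − g_ee(x)·g_nn(x)) and G_ne(x,s,t)·D = g_en(x) + (1−t)·(g_en(x)² − g_ee(x)·g_nn(x)). -/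
namespace S10


lemma count_add_count (l : List Bool) : l.count true + l.count false = l.length := by
  have := l.length_eq_countP_add_countP (· == true)
  simp only [List.count] at *
  have h2 : List.countP (fun a => decide ¬(a == true) = true) l = List.countP (· == false) l := by
    apply List.countP_congr; intro a _; cases a <;> simp
  omega

lemma InL_length {α β k : ℕ} {p : LatticePath} (h : InL α β k p) : p.length = (α+β)*k := by
  have := count_add_count p; rw [h.1, h.2] at this; rw [← this]; ring

lemma finite_of_subset_InL {α β k : ℕ} {S : Set LatticePath} (h : ∀ p ∈ S, InL α β k p) :
    S.Finite :=
  (List.finite_length_eq Bool ((α+β)*k)).subset (fun p hp => InL_length (h p hp))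

lemma finite_A (n m : ℕ) : {l : List Bool | l.length = n ∧ l.count true = m}.Finite :=
  (List.finite_length_eq Bool n).subset (fun _ hp => hp.1)

lemma ncard_length_count (n : ℕ) : ∀ m, {l : List Bool | l.length = n ∧ l.count true = m}.ncard
    = n.choose m := by
  induction n with
  | zero =>
    intro m
    cases m with
    | zero =>
      have : {l : List Bool | l.length = 0 ∧ l.count true = 0} = {[]} := by
        ext l; simp [List.length_eq_zero_iff]; rintro rfl; simp
      rw [this, Set.ncard_singleton]; simp
    | succ m =>
      have : {l : List Bool | l.length = 0 ∧ l.count true = m+1} = ∅ := by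
        ext l; simp [List.length_eq_zero_iff]; rintro rfl; simp
      rw [this, Set.ncard_empty]; simp
  | succ n ih =>
    intro m
    have hinj : ∀ c : Bool, Function.Injective (fun l : List Bool => c :: l) := by
      intro c l1 l2 h; simpa using h
    cases m with
    | zero =>
      have : {l : List Bool | l.length = n+1 ∧ l.count true = 0}
          = (fun l => false :: l) '' {l : List Bool | l.length = n ∧ l.count true = 0} := by
        ext l
        constructor
        · rintro ⟨hl, hc⟩
          cases l with
          | nil => simp at hl
          | cons c t =>
            cases c
            · exact ⟨t, ⟨by simpa using hl, by simpa using hc⟩, rfl⟩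
            · simp [List.count_cons] at hc
        · rintro ⟨t, ⟨hl, hc⟩, rfl⟩
          exact ⟨by simpa using hl, by simpa [List.count_cons] using hc⟩
      rw [this, Set.ncard_image_of_injective _ (hinj false), ih 0]
      simp
    | succ m =>
      have hset : {l : List Bool | l.length = n+1 ∧ l.count true = m+1}
          = (fun l => true :: l) '' {l : List Bool | l.length = n ∧ l.count true = m}
            ∪ (fun l => false :: l) '' {l : List Bool | l.length = n ∧ l.count true = m+1} := by
        ext l
        constructor
        · rintro ⟨hl, hc⟩
          cases l with
          | nil => simp at hl
          | cons c t =>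
            cases c
            · exact Or.inr ⟨t, ⟨by simpa using hl, by simpa [List.count_cons] using hc⟩, rfl⟩
            · exact Or.inl ⟨t, ⟨by simpa using hl, by simpa [List.count_cons] using hc⟩, rfl⟩
        · rintro (⟨t, ⟨hl, hc⟩, rfl⟩ | ⟨t, ⟨hl, hc⟩, rfl⟩)
          · exact ⟨by simpa using hl, by simp [List.count_cons, hc]⟩
          · exact ⟨by simpa using hl, by simpa [List.count_cons] using hc⟩
      rw [hset, Set.ncard_union_eq ?disj ((finite_A n m).image _) ((finite_A n (m+1)).image _),
        Set.ncard_image_of_injective _ (hinj true), Set.ncard_image_of_injective _ (hinj false),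
        ih m, ih (m+1)]
      · rw [Nat.choose_succ_succ]
      case disj =>
        rw [Set.disjoint_left]
        rintro l ⟨t, _, rfl⟩ ⟨u, _, h⟩
        simpa using h

lemma ncard_length_count_false (n m : ℕ) :
    {l : List Bool | l.length = n ∧ l.count false = m}.ncard = n.choose m := by
  have himg : {l : List Bool | l.length = n ∧ l.count false = m}
      = (List.map not) '' {l : List Bool | l.length = n ∧ l.count true = m} := by
    ext l
    constructor
    · rintro ⟨hl, hc⟩
      refine ⟨l.map not, ⟨by simpa using hl, ?_⟩, by simp [List.map_map, Function.comp_def]⟩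
      rw [← hc, List.count, List.count, List.countP_map]
      apply List.countP_congr; intro a _; cases a <;> simp
    · rintro ⟨t, ⟨hl, hc⟩, rfl⟩
      refine ⟨by simpa using hl, ?_⟩
      rw [← hc, List.count, List.count, List.countP_map]
      apply List.countP_congr; intro a _; cases a <;> simp
  rw [himg, Set.ncard_image_of_injective _ ?_, ncard_length_count]
  intro l1 l2 h
  have := congrArg (List.map not) h
  simpa [List.map_map, Function.comp_def] using this





lemma enc_injective (a b : Bool) : Function.Injective (fun l : List Bool => a :: (l ++ [b])) := by
  intro l1 l2 h
  have h2 : l1 ++ [b] = l2 ++ [b] := by simpa using h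
  have := congrArg List.dropLast h2
  simpa using this

lemma PS_eq (α β k : ℕ) (a b : Bool) (hn : 2 ≤ (α+β)*k) :
    {p : LatticePath | InL α β k p ∧ FirstStep p a ∧ LastStep p b}
      = (fun l => a :: (l ++ [b])) ''
        {l : List Bool | l.length = (α+β)*k - 2
          ∧ l.count true + ((cond a 1 0) + (cond b 1 0)) = α*k
          ∧ l.count false + ((cond a 0 1) + (cond b 0 1)) = β*k} := by
  ext p
  constructor
  · rintro ⟨⟨hct, hcf⟩, hf, hl⟩
    have hplen : p.length = (α+β)*k := by
      have := count_add_count p; rw [hct, hcf] at this; rw [← this]; ring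
    obtain ⟨t, rfl⟩ : ∃ t, p = a :: t := by
      cases p with
      | nil => simp [FirstStep] at hf
      | cons c t =>
        simp only [FirstStep, List.head?_cons, Option.some.injEq] at hf
        exact ⟨t, by rw [hf]⟩
    have ht : t ≠ [] := by
      rintro rfl; simp at hplen; omega
    have hlast : t.getLast? = some b := by
      cases t with
      | nil => exact absurd rfl ht
      | cons c u => simpa [LastStep] using hl
    obtain ⟨l, rfl⟩ : ∃ l, t = l ++ [b] := by
      refine ⟨t.dropLast, ?_⟩
      have := List.dropLast_append_getLast ht
      rw [List.getLast?_eq_getLast ht] at hlast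
      simp only [Option.some.injEq] at hlast
      rw [hlast] at this; exact this.symm
    refine ⟨l, ⟨?_, ?_, ?_⟩, rfl⟩
    · have : (a :: (l ++ [b])).length = l.length + 2 := by simp
      omega
    · have : (a :: (l ++ [b])).count true = l.count true + ((cond a 1 0) + (cond b 1 0)) := by
        cases a <;> cases b <;> simp [List.count_cons, List.count_append] <;> ring
      omega
    · have : (a :: (l ++ [b])).count false = l.count false + ((cond a 0 1) + (cond b 0 1)) := by
        cases a <;> cases b <;> simp [List.count_cons, List.count_append] <;> ring
      omega
  · rintro ⟨l, ⟨hlen, hct, hcf⟩, rfl⟩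
    dsimp only
    refine ⟨⟨?_, ?_⟩, ?_, ?_⟩
    · have : (a :: (l ++ [b])).count true = l.count true + ((cond a 1 0) + (cond b 1 0)) := by
        cases a <;> cases b <;> simp [List.count_cons, List.count_append] <;> ring
      omega
    · have : (a :: (l ++ [b])).count false = l.count false + ((cond a 0 1) + (cond b 0 1)) := by
        cases a <;> cases b <;> simp [List.count_cons, List.count_append] <;> ring
      omega
    · simp [FirstStep]
    · show (a :: (l ++ [b])).getLast? = some b
      rw [show a :: (l ++ [b]) = (a :: l) ++ [b] by simp, List.getLast?_append]
      simp





def IsB (α β : ℕ) (c : Bool) (p : LatticePath) (i : ℕ) : Prop :=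
  p[i]? = some c ∧ p[i + 1]? = some (!c) ∧
    α * ((p.take (i + 1)).count false) = β * ((p.take (i + 1)).count true)

variable {α β : ℕ}

lemma isLeftBounce_iff {p : LatticePath} {i : ℕ} :
    IsLeftBounce α β p i ↔ IsB α β true p i := Iff.rfl

lemma isRightBounce_iff {p : LatticePath} {i : ℕ} :
    IsRightBounce α β p i ↔ IsB α β false p i := Iff.rfl

lemma leftBounces_eq (p : LatticePath) : leftBounces α β p = {i | IsB α β true p i}.ncard := rfl
lemma rightBounces_eq (p : LatticePath) : rightBounces α β p = {i | IsB α β false p i}.ncard := rfl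

lemma bounceFree_iff {p : LatticePath} : BounceFree α β p ↔ ∀ c i, ¬ IsB α β c p i := by
  constructor
  · rintro ⟨h1, h2⟩ c i
    cases c
    · exact h2 i
    · exact h1 i
  · intro h
    exact ⟨fun i => h true i, fun i => h false i⟩

lemma isB_lt_length {c : Bool} {p : LatticePath} {i : ℕ} (h : IsB α β c p i) :
    i + 1 < p.length := by
  by_contra h'
  have h2 := h.2.1
  rw [List.getElem?_eq_none (by omega)] at h2
  simp at h2

lemma finite_isB (c : Bool) (p : LatticePath) : {i | IsB α β c p i}.Finite :=
  (Set.finite_Iio p.length).subset (fun i hi => by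
    have := isB_lt_length hi; simp only [Set.mem_Iio]; omega)

lemma isB_append_iff {q u : LatticePath} (hline : α * q.count false = β * q.count true)
    (hq : q ≠ []) (c : Bool) (i : ℕ) :
    IsB α β c (q ++ u) i ↔
      ((i + 1 < q.length ∧ IsB α β c q i)
       ∨ (i = q.length - 1 ∧ q.getLast? = some c ∧ u.head? = some (!c))
       ∨ (q.length ≤ i ∧ IsB α β c u (i - q.length))) := by
  have hq1 : 1 ≤ q.length := List.length_pos_iff.mpr hq
  rcases lt_trichotomy (i+1) q.length with hlt | heq | hgt
  · have htake : (q ++ u).take (i+1) = q.take (i+1) := by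
      rw [List.take_append, show i + 1 - q.length = 0 by omega,
        List.take_zero, List.append_nil]
    constructor
    · rintro ⟨h1, h2, h3⟩
      rw [List.getElem?_append_left (by omega)] at h1
      rw [List.getElem?_append_left hlt] at h2
      rw [htake] at h3
      exact Or.inl ⟨hlt, h1, h2, h3⟩
    · rintro (⟨_, h1, h2, h3⟩ | ⟨hi, _⟩ | ⟨hge, _⟩)
      · exact ⟨by rw [List.getElem?_append_left (by omega)]; exact h1,
          by rw [List.getElem?_append_left hlt]; exact h2, by rw [htake]; exact h3⟩
      · omega
      · omega
  · have hi : i = q.length - 1 := by omega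
    have htake : (q ++ u).take (i+1) = q := by
      rw [heq, List.take_left]
    have hgE : q.getLast? = q[i]? := by rw [List.getLast?_eq_getElem?, hi]
    have h1E : (q ++ u)[i]? = q[i]? := List.getElem?_append_left (by omega)
    have h2E : (q ++ u)[i+1]? = u.head? := by
      rw [List.getElem?_append_right (by omega), show i + 1 - q.length = 0 by omega,
        ← List.head?_eq_getElem?]
    constructor
    · rintro ⟨h1, h2, h3⟩
      exact Or.inr (Or.inl ⟨hi, by rw [hgE, ← h1E]; exact h1, by rw [← h2E]; exact h2⟩)
    · rintro (⟨h, _⟩ | ⟨_, hl, hh⟩ | ⟨hge, _⟩)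
      · omega
      · exact ⟨by rw [h1E, ← hgE]; exact hl, by rw [h2E]; exact hh, by rw [htake]; exact hline⟩
      · omega
  · have hge : q.length ≤ i := by omega
    have htake : (q ++ u).take (i+1) = q ++ u.take (i - q.length + 1) := by
      rw [List.take_append, List.take_of_length_le (by omega),
        show i + 1 - q.length = i - q.length + 1 by omega]
    have h1E : (q ++ u)[i]? = u[i - q.length]? := List.getElem?_append_right hge
    have h2E : (q ++ u)[i+1]? = u[i - q.length + 1]? := by
      rw [List.getElem?_append_right (by omega), show i + 1 - q.length = i - q.length + 1 by omega]
    have hcnt : ∀ a : Bool, ((q ++ u).take (i+1)).count a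
        = q.count a + (u.take (i - q.length + 1)).count a := by
      intro a; rw [htake, List.count_append]
    constructor
    · rintro ⟨h1, h2, h3⟩
      rw [hcnt, hcnt, Nat.mul_add, Nat.mul_add] at h3
      exact Or.inr (Or.inr ⟨hge, by rw [← h1E]; exact h1, by rw [← h2E]; exact h2, by omega⟩)
    · rintro (⟨h, _⟩ | ⟨hi, _⟩ | ⟨_, h1, h2, h3⟩)
      · omega
      · omega
      · exact ⟨by rw [h1E]; exact h1, by rw [h2E]; exact h2,
          by rw [hcnt, hcnt, Nat.mul_add, Nat.mul_add]; omega⟩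

/-- Decomposition of the bounce sets of a concatenation `q ++ u` where `q` is
bounce-free, ends on the line, ends with step `c` and `u` starts with `!c`. -/
lemma bounce_sets_concat {q u : LatticePath} {c : Bool}
    (hline : α * q.count false = β * q.count true) (hq : q ≠ [])
    (hbf : ∀ c' i, ¬ IsB α β c' q i) (hql : q.getLast? = some c) (huh : u.head? = some (!c)) :
    {i | IsB α β c (q ++ u) i} = insert (q.length - 1) ((q.length + ·) '' {i | IsB α β c u i})
    ∧ {i | IsB α β (!c) (q ++ u) i} = (q.length + ·) '' {i | IsB α β (!c) u i} := by
  constructor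
  · ext i
    rw [Set.mem_setOf_eq, isB_append_iff hline hq, Set.mem_insert_iff, Set.mem_image]
    constructor
    · rintro (⟨_, hb⟩ | ⟨hi, _⟩ | ⟨hge, hb⟩)
      · exact absurd hb (hbf _ _)
      · exact Or.inl hi
      · exact Or.inr ⟨i - q.length, hb, by omega⟩
    · rintro (rfl | ⟨x, hb, rfl⟩)
      · exact Or.inr (Or.inl ⟨rfl, hql, huh⟩)
      · exact Or.inr (Or.inr ⟨by omega,
          by simpa [show q.length + x - q.length = x by omega] using hb⟩)
  · ext i
    rw [Set.mem_setOf_eq, isB_append_iff hline hq, Set.mem_image]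
    constructor
    · rintro (⟨_, hb⟩ | ⟨_, hl, _⟩ | ⟨hge, hb⟩)
      · exact absurd hb (hbf _ _)
      · rw [hql] at hl
        cases c <;> simp at hl
      · exact ⟨i - q.length, hb, by omega⟩
    · rintro ⟨x, hb, rfl⟩
      exact Or.inr (Or.inr ⟨by omega,
        by simpa [show q.length + x - q.length = x by omega] using hb⟩)

lemma ncard_bounce_concat {q u : LatticePath} {c : Bool}
    (hline : α * q.count false = β * q.count true) (hq : q ≠ [])
    (hbf : ∀ c' i, ¬ IsB α β c' q i) (hql : q.getLast? = some c) (huh : u.head? = some (!c)) :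
    {i | IsB α β c (q ++ u) i}.ncard = {i | IsB α β c u i}.ncard + 1
    ∧ {i | IsB α β (!c) (q ++ u) i}.ncard = {i | IsB α β (!c) u i}.ncard := by
  obtain ⟨e1, e2⟩ := bounce_sets_concat hline hq hbf hql huh
  have hinj : Function.Injective (q.length + ·) := fun a b h => by
    simpa using h
  constructor
  · rw [e1, Set.ncard_insert_of_notMem ?nm (((finite_isB c u).image _))]
    · rw [Set.ncard_image_of_injective _ hinj]
    case nm =>
      rintro ⟨x, _, hx⟩
      dsimp only at hx
      have : 1 ≤ q.length := List.length_pos_iff.mpr hq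
      omega
  · rw [e2, Set.ncard_image_of_injective _ hinj]





variable {α β : ℕ}

def PSet (α β k : ℕ) (a b : Bool) : Set LatticePath :=
  {p | InL α β k p ∧ FirstStep p a ∧ LastStep p b}

def BFSet (α β k : ℕ) (a b : Bool) : Set LatticePath :=
  {p | InL α β k p ∧ BounceFree α β p ∧ FirstStep p a ∧ LastStep p b}

def BSet (α β k : ℕ) (a b : Bool) (ℓ r : ℕ) : Set LatticePath :=
  {p | InL α β k p ∧ FirstStep p a ∧ LastStep p b ∧
    leftBounces α β p = ℓ ∧ rightBounces α β p = r}

/-- first bounce of `p` is of type `c` and occurs at junction index `(α+β)*j - 1` -/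
def FB (α β : ℕ) (c : Bool) (j : ℕ) (p : LatticePath) : Prop :=
  IsB α β c p ((α+β)*j - 1) ∧ ∀ c' i, i < (α+β)*j - 1 → ¬ IsB α β c' p i

lemma line_point (hα : 0 < α) (hcop : Nat.Coprime α β) {ct cf : ℕ}
    (h : α * cf = β * ct) : ∃ j, ct = α * j ∧ cf = β * j := by
  have hdvd : α ∣ ct := hcop.dvd_of_dvd_mul_left ⟨cf, h.symm⟩
  obtain ⟨j, hj⟩ := hdvd
  refine ⟨j, hj, ?_⟩
  have : α * cf = α * (β * j) := by rw [h, hj]; ring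
  exact Nat.eq_of_mul_eq_mul_left hα this

lemma isB_line_decomp (hα : 0 < α) (hcop : Nat.Coprime α β) {c : Bool} {p : LatticePath}
    {i : ℕ} (h : IsB α β c p i) :
    ∃ j, 1 ≤ j ∧ i + 1 = (α+β)*j
      ∧ (p.take (i+1)).count true = α*j ∧ (p.take (i+1)).count false = β*j := by
  obtain ⟨j, hct, hcf⟩ := line_point hα hcop h.2.2
  have hlen : (p.take (i+1)).length = i+1 := by
    rw [List.length_take]; have := isB_lt_length h; omega
  have hsum := count_add_count (p.take (i+1))
  have hd : (α+β)*j = α*j + β*j := by ring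
  have hαj : 1 ≤ α * j ∨ 1 ≤ β * j ∨ j = 0 := by
    rcases Nat.eq_zero_or_pos j with rfl | hj
    · right; right; rfl
    · left; exact Nat.mul_pos hα hj
  refine ⟨j, ?_, by omega, hct, hcf⟩
  rcases Nat.eq_zero_or_pos j with rfl | hj
  · omega
  · exact hj

lemma exists_FB (hα : 0 < α) (hβ : 0 < β) (hcop : Nat.Coprime α β) {k : ℕ} {p : LatticePath}
    (hp : InL α β k p) (hnb : ¬ BounceFree α β p) :
    ∃ c j, 1 ≤ j ∧ j < k ∧ FB α β c j p := by
  classical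
  have hex : ∃ i, ∃ c, IsB α β c p i := by
    rw [bounceFree_iff] at hnb
    push_neg at hnb
    obtain ⟨c, i, h⟩ := hnb
    exact ⟨i, c, h⟩
  obtain ⟨c, hc⟩ := Nat.find_spec hex
  obtain ⟨j, hj1, hij, _, _⟩ := isB_line_decomp hα hcop hc
  have h1 := isB_lt_length hc
  have h2 := InL_length hp
  refine ⟨c, j, hj1, ?_, ?_, ?_⟩
  · have : (α+β)*j < (α+β)*k := by omega
    exact Nat.lt_of_mul_lt_mul_left this
  · rw [show (α+β)*j - 1 = Nat.find hex by omega]; exact hc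
  · intro c' i hi h'
    exact Nat.find_min hex (by omega) ⟨c', h'⟩

lemma FB_disjoint (hα : 0 < α) (hβ : 0 < β) {c c' : Bool} {j j' : ℕ} {p : LatticePath}
    (h : FB α β c j p) (h' : FB α β c' j' p) (hj : 1 ≤ j) (hj' : 1 ≤ j') :
    c = c' ∧ j = j' := by
  have hαβ : 0 < α + β := by omega
  have l1 : 1 ≤ (α+β)*j := Nat.mul_pos hαβ hj
  have l1' : 1 ≤ (α+β)*j' := Nat.mul_pos hαβ hj'
  have hij : (α+β)*j - 1 = (α+β)*j' - 1 := by
    by_contra hne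
    rcases Nat.lt_or_ge ((α+β)*j - 1) ((α+β)*j' - 1) with hlt | hge
    · exact h'.2 c _ hlt h.1
    · exact h.2 c' _ (by omega) h'.1
  have hjj : j = j' := by
    have : (α+β)*j = (α+β)*j' := by omega
    exact Nat.eq_of_mul_eq_mul_left hαβ this
  subst hjj
  have e1 := h.1.1
  have e2 := h'.1.1
  rw [e1] at e2
  exact ⟨(Option.some.inj e2), rfl⟩

lemma FB_not_bounceFree {c : Bool} {j : ℕ} {p : LatticePath} (h : FB α β c j p) :
    ¬ BounceFree α β p :=
  fun hbf => (bounceFree_iff.mp hbf) c _ h.1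

/-- The forward analysis: structure of `take`/`drop` for a path whose first bounce
is of type `c` at `j`. -/
lemma FB_analysis (hα : 0 < α) (hβ : 0 < β) (hcop : Nat.Coprime α β) {k j : ℕ}
    {a b c : Bool} (hj : 1 ≤ j) (hjk : j < k) {p : LatticePath}
    (hp : p ∈ PSet α β k a b) (hfb : FB α β c j p) :
    (p.take ((α+β)*j)).count true = α*j ∧ (p.take ((α+β)*j)).count false = β*j
    ∧ (∀ c' i, ¬ IsB α β c' (p.take ((α+β)*j)) i)
    ∧ (p.take ((α+β)*j)).getLast? = some c
    ∧ (p.drop ((α+β)*j)).head? = some (!c) := by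
  obtain ⟨⟨hct, hcf⟩, hfirst, hlast⟩ := hp
  have hplen : p.length = (α+β)*k := InL_length ⟨hct, hcf⟩
  have hαβ : 0 < α + β := by omega
  have hm1 : 1 ≤ (α+β)*j := Nat.mul_pos hαβ hj
  set m := (α+β)*j with hm
  have hmlt : m < p.length := by
    have hexp : (α+β)*(j+1) = (α+β)*j + (α+β) := Nat.mul_succ _ _
    have hle : (α+β)*(j+1) ≤ (α+β)*k := Nat.mul_le_mul_left _ (by omega)
    rw [hplen]; omega
  have hb := hfb.1
  have hb2 := hfb.1.2.1
  have hi1 : m - 1 + 1 = m := by omega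
  obtain ⟨j', hj'1, hij', hct', hcf'⟩ := isB_line_decomp hα hcop hb
  have hjj' : j' = j := by
    have : (α+β)*j' = (α+β)*j := by omega
    exact Nat.eq_of_mul_eq_mul_left hαβ this
  subst hjj'
  rw [hi1] at hct' hcf'
  have hqlen : (p.take m).length = m := by
    rw [List.length_take]; omega
  have hql : (p.take m).getLast? = some c := by
    rw [List.getLast?_eq_getElem?, hqlen, List.getElem?_take_of_lt (by omega)]
    exact hb.1
  have huh : (p.drop m).head? = some (!c) := by
    rw [List.head?_eq_getElem?, List.getElem?_drop, Nat.add_zero]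
    rw [hi1] at hb2
    exact hb2
  refine ⟨hct', hcf', ?_, hql, huh⟩
  intro c' i hbad
  have hlt : i + 1 < m := by
    have := isB_lt_length hbad
    omega
  have hline : α * (p.take m).count false = β * (p.take m).count true := by
    rw [hct', hcf']; ring
  have hqne : p.take m ≠ [] := by
    intro h0
    rw [h0] at hqlen
    simp at hqlen
    omega
  have : IsB α β c' (p.take m ++ p.drop m) i := by
    rw [isB_append_iff hline hqne]
    exact Or.inl ⟨by omega, hbad⟩
  rw [List.take_append_drop] at this
  exact hfb.2 c' i (by omega) this

lemma FB_split (hα : 0 < α) (hβ : 0 < β) (hcop : Nat.Coprime α β) {k j : ℕ}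
    {a b c : Bool} (hj : 1 ≤ j) (hjk : j < k) :
    Set.BijOn (fun p : LatticePath => (p.take ((α+β)*j), p.drop ((α+β)*j)))
      (PSet α β k a b ∩ {p | FB α β c j p})
      ((BFSet α β j a c) ×ˢ (PSet α β (k-j) (!c) b))
    ∧ ∀ p ∈ PSet α β k a b ∩ {p | FB α β c j p},
        {i | IsB α β c p i}.ncard = {i | IsB α β c (p.drop ((α+β)*j)) i}.ncard + 1
        ∧ {i | IsB α β (!c) p i}.ncard = {i | IsB α β (!c) (p.drop ((α+β)*j)) i}.ncard := by
  have hαβ : 0 < α + β := by omega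
  set m := (α+β)*j with hm
  have hm1 : 1 ≤ m := Nat.mul_pos hαβ hj
  -- facts for a point of the source
  have hsrc : ∀ p ∈ PSet α β k a b ∩ {p | FB α β c j p},
      (p.take m).count true = α*j ∧ (p.take m).count false = β*j
      ∧ (∀ c' i, ¬ IsB α β c' (p.take m) i)
      ∧ (p.take m).getLast? = some c ∧ (p.drop m).head? = some (!c) := by
    rintro p ⟨hp, hfb⟩
    exact FB_analysis hα hβ hcop hj hjk hp hfb
  have key : ∀ p ∈ PSet α β k a b ∩ {p | FB α β c j p},
      (p.take m, p.drop m) ∈ (BFSet α β j a c) ×ˢ (PSet α β (k-j) (!c) b) := by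
    rintro p ⟨⟨⟨hct, hcf⟩, hfirst, hlast⟩, hfb⟩
    obtain ⟨h1, h2, h3, h4, h5⟩ := hsrc p ⟨⟨⟨hct, hcf⟩, hfirst, hlast⟩, hfb⟩
    have hplen : p.length = (α+β)*k := InL_length ⟨hct, hcf⟩
    have hdct : (p.take m).count true + (p.drop m).count true = p.count true := by
      rw [← List.count_append, List.take_append_drop]
    have hdcf : (p.take m).count false + (p.drop m).count false = p.count false := by
      rw [← List.count_append, List.take_append_drop]
    have hsub : α*(k-j) + α*j = α*k := by rw [← Nat.mul_add]; congr 1; omega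
    have hsub' : β*(k-j) + β*j = β*k := by rw [← Nat.mul_add]; congr 1; omega
    have hune : p.drop m ≠ [] := by
      intro h0; rw [h0] at h5; simp at h5
    rw [Set.mem_prod]
    dsimp only
    constructor
    · refine ⟨⟨h1, h2⟩, bounceFree_iff.mpr h3, ?_, h4⟩
      rw [FirstStep, List.head?_eq_getElem?, List.getElem?_take_of_lt (by omega)]
      rw [FirstStep, List.head?_eq_getElem?] at hfirst
      exact hfirst
    · refine ⟨⟨by omega, by omega⟩, h5, ?_⟩
      rw [LastStep] at hlast ⊢
      rw [← List.take_append_drop m p, List.getLast?_append] at hlast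
      rcases ho : (p.drop m).getLast? with _ | y
      · rw [List.getLast?_eq_none_iff] at ho
        exact absurd ho hune
      · rw [ho] at hlast
        simpa using hlast
  constructor
  · refine ⟨key, ?_, ?_⟩
    · -- InjOn
      rintro p1 _ p2 _ hpair
      have h1 : p1.take m = p2.take m := congrArg Prod.fst hpair
      have h2 : p1.drop m = p2.drop m := congrArg Prod.snd hpair
      rw [← List.take_append_drop m p1, h1, h2, List.take_append_drop]
    · -- SurjOn
      rintro ⟨q, u⟩ ⟨⟨⟨hq1, hq2⟩, hqbf, hqf, hql⟩, ⟨⟨hu1, hu2⟩, huf, hul⟩⟩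
      have hqlen : q.length = m := by
        have := count_add_count q
        rw [hq1, hq2] at this
        rw [← this, hm]; ring
      have hqne : q ≠ [] := by
        intro h0; rw [h0] at hqlen; simp at hqlen; omega
      have hune : u ≠ [] := by
        intro h0; rw [h0] at huf; simp [FirstStep] at huf
      have hline : α * q.count false = β * q.count true := by
        rw [hq1, hq2]; ring
      have hbfq := bounceFree_iff.mp hqbf
      have hsub : α*(k-j) + α*j = α*k := by rw [← Nat.mul_add]; congr 1; omega
      have hsub' : β*(k-j) + β*j = β*k := by rw [← Nat.mul_add]; congr 1; omega
      refine ⟨q ++ u, ⟨⟨⟨?_, ?_⟩, ?_, ?_⟩, ?_⟩, ?_⟩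
      · rw [List.count_append, hq1, hu1]; omega
      · rw [List.count_append, hq2, hu2]; omega
      · rw [FirstStep, List.head?_append]
        rw [FirstStep] at hqf
        rw [hqf]; rfl
      · rw [LastStep, List.getLast?_append]
        rw [LastStep] at hul
        rw [hul]; rfl
      · -- FB c j (q ++ u)
        obtain ⟨e1, e2⟩ := bounce_sets_concat hline hqne hbfq hql huf
        constructor
        · have : (q.length - 1) ∈ {i | IsB α β c (q ++ u) i} := by
            rw [e1]; exact Set.mem_insert _ _
          rw [hqlen, hm] at this
          exact this
        · intro c' i hi hbad
          rw [isB_append_iff hline hqne] at hbad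
          rcases hbad with ⟨_, hb⟩ | ⟨hieq, _⟩ | ⟨hgt, _⟩
          · exact hbfq c' i hb
          · omega
          · omega
      · -- the map applied to q ++ u gives (q, u)
        dsimp only
        rw [← hqlen, List.take_left, List.drop_left]
  · -- counts
    rintro p hp
    obtain ⟨h1, h2, h3, h4, h5⟩ := hsrc p hp
    have hline : α * (p.take m).count false = β * (p.take m).count true := by
      rw [h1, h2]; ring
    have hqne : p.take m ≠ [] := by
      intro h0
      have := congrArg List.count h0  -- dummy
      rw [h0] at h4; simp at h4
    have := ncard_bounce_concat hline hqne h3 h4 h5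
    rwa [List.take_append_drop] at this





variable {α β : ℕ}

lemma bijOn_ncard {X Y : Type*} {f : X → Y} {s : Set X} {t : Set Y} (h : Set.BijOn f s t) :
    s.ncard = t.ncard := by
  rw [← h.image_eq, Set.ncard_image_of_injOn h.injOn]

lemma ncard_prod {X Y : Type*} (s : Set X) (t : Set Y) :
    (s ×ˢ t).ncard = s.ncard * t.ncard := by
  rw [← Nat.card_coe_set_eq, ← Nat.card_coe_set_eq, ← Nat.card_coe_set_eq,
    Nat.card_congr (Equiv.Set.prod s t), Nat.card_prod]

lemma ncard_biUnion {X : Type*} (s : Finset ℕ) (f : ℕ → Set X)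
    (hf : ∀ i ∈ s, (f i).Finite)
    (hdisj : ∀ i ∈ s, ∀ j ∈ s, i ≠ j → Disjoint (f i) (f j)) :
    (⋃ i ∈ s, f i).ncard = ∑ i ∈ s, (f i).ncard := by
  classical
  induction s using Finset.cons_induction with
  | empty => simp
  | cons a s' ha ih =>
    rw [Finset.sum_cons, Finset.cons_eq_insert, Finset.set_biUnion_insert]
    rw [Set.ncard_union_eq ?disj (hf a (Finset.mem_cons_self a s')) ?fin, ih ?f1 ?d1]
    · intro i hi; exact hf i (Finset.mem_cons_of_mem hi)
    · intro i hi j hj hij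
      exact hdisj i (Finset.mem_cons_of_mem hi) j (Finset.mem_cons_of_mem hj) hij
    case disj =>
      rw [Set.disjoint_iUnion_right]
      intro i
      rw [Set.disjoint_iUnion_right]
      intro hi
      have hi' : i ∈ s' := Finset.mem_coe.mp hi
      exact hdisj a (Finset.mem_cons_self a s') i (Finset.mem_cons_of_mem hi')
        (by rintro rfl; exact ha hi')
    case fin =>
      exact Set.Finite.biUnion s'.finite_toSet
        (fun i hi => hf i (Finset.mem_cons_of_mem (Finset.mem_coe.mp hi)))

lemma bijOn_inter {X Y : Type*} {f : X → Y} {s : Set X} {t : Set Y} (h : Set.BijOn f s t)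
    {P : X → Prop} {Q : Y → Prop} (hPQ : ∀ x ∈ s, (P x ↔ Q (f x))) :
    Set.BijOn f (s ∩ {x | P x}) (t ∩ {y | Q y}) := by
  refine ⟨?_, h.injOn.mono Set.inter_subset_left, ?_⟩
  · rintro x ⟨hx, hPx⟩
    exact ⟨h.mapsTo hx, (hPQ x hx).mp hPx⟩
  · rintro y ⟨hy, hQy⟩
    obtain ⟨x, hx, rfl⟩ := h.surjOn hy
    exact ⟨x, ⟨hx, (hPQ x hx).mpr hQy⟩, rfl⟩

lemma bounceFree_iff_counts {p : LatticePath} :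
    BounceFree α β p ↔ leftBounces α β p = 0 ∧ rightBounces α β p = 0 := by
  rw [bounceFree_iff, leftBounces_eq, rightBounces_eq]
  constructor
  · intro h
    constructor <;> · rw [Set.ncard_eq_zero (finite_isB _ _)]
                      ext i; simp only [Set.mem_setOf_eq, Set.mem_empty_iff_false, iff_false]
                      exact h _ i
  · rintro ⟨h1, h2⟩ c i
    rw [Set.ncard_eq_zero (finite_isB _ _)] at h1 h2
    cases c
    · exact fun hb => (Set.eq_empty_iff_forall_notMem.mp h2) i hb
    · exact fun hb => (Set.eq_empty_iff_forall_notMem.mp h1) i hb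

lemma finite_PSet (k : ℕ) (a b : Bool) : (PSet α β k a b).Finite :=
  finite_of_subset_InL (fun p hp => hp.1)

lemma card_partition (hα : 0 < α) (hβ : 0 < β) (hcop : Nat.Coprime α β) {k : ℕ} {a b : Bool}
    (S : Set LatticePath) (hS : S ⊆ PSet α β k a b) :
    S.ncard = (S ∩ {p | BounceFree α β p}).ncard
      + ∑ j ∈ Finset.Ico 1 k,
          ((S ∩ {p | FB α β true j p}).ncard + (S ∩ {p | FB α β false j p}).ncard) := by
  classical
  have hfin : S.Finite := (finite_PSet k a b).subset hS
  have hcover : S = (S ∩ {p | BounceFree α β p})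
      ∪ ⋃ j ∈ Finset.Ico 1 k, ((S ∩ {p | FB α β true j p}) ∪ (S ∩ {p | FB α β false j p})) := by
    apply Set.Subset.antisymm
    · intro p hp
      by_cases hbf : BounceFree α β p
      · exact Or.inl ⟨hp, hbf⟩
      · obtain ⟨c, j, hj1, hjk, hfb⟩ := exists_FB hα hβ hcop (hS hp).1 hbf
        refine Or.inr (Set.mem_biUnion (Finset.mem_Ico.mpr ⟨hj1, hjk⟩) ?_)
        cases c
        · exact Or.inr ⟨hp, hfb⟩
        · exact Or.inl ⟨hp, hfb⟩
    · intro p hp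
      rcases hp with ⟨h, _⟩ | h
      · exact h
      · simp only [Set.mem_iUnion] at h
        obtain ⟨j, _, h⟩ := h
        rcases h with ⟨h, _⟩ | ⟨h, _⟩ <;> exact h
  have hdisjFB : ∀ (c c' : Bool) (j j' : ℕ), 1 ≤ j → 1 ≤ j' → (c, j) ≠ (c', j') →
      Disjoint (S ∩ {p | FB α β c j p}) (S ∩ {p | FB α β c' j' p}) := by
    intro c c' j j' hj hj' hne
    rw [Set.disjoint_left]
    rintro p ⟨_, h1⟩ ⟨_, h2⟩
    obtain ⟨rfl, rfl⟩ := FB_disjoint hα hβ h1 h2 hj hj'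
    exact hne rfl
  have hbigdisj : Disjoint (S ∩ {p | BounceFree α β p})
      (⋃ j ∈ Finset.Ico 1 k, ((S ∩ {p | FB α β true j p}) ∪ (S ∩ {p | FB α β false j p}))) := by
    rw [Set.disjoint_iUnion_right]
    intro j
    rw [Set.disjoint_iUnion_right]
    intro _
    apply Set.disjoint_union_right.mpr
    constructor <;> (rw [Set.disjoint_left]; rintro p ⟨_, hbf⟩ ⟨_, hfb⟩)
    · exact FB_not_bounceFree hfb hbf
    · exact FB_not_bounceFree hfb hbf
  have hu := Set.ncard_union_eq hbigdisj (hfin.subset Set.inter_subset_left)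
    (Set.Finite.biUnion (Finset.finite_toSet _) (fun j _ =>
      ((hfin.subset Set.inter_subset_left).union (hfin.subset Set.inter_subset_left))))
  have hb := ncard_biUnion (Finset.Ico 1 k)
    (fun j => (S ∩ {p | FB α β true j p}) ∪ (S ∩ {p | FB α β false j p}))
    (fun j _ => ((hfin.subset Set.inter_subset_left).union (hfin.subset Set.inter_subset_left)))
    (by
      intro i hi j hj hij
      rw [Finset.mem_Ico] at hi hj
      apply Set.disjoint_union_left.mpr
      constructor <;> (apply Set.disjoint_union_right.mpr; constructor)
      · exact hdisjFB true true i j hi.1 hj.1 (by simp [hij])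
      · exact hdisjFB true false i j hi.1 hj.1 (by simp [hij])
      · exact hdisjFB false true i j hi.1 hj.1 (by simp [hij])
      · exact hdisjFB false false i j hi.1 hj.1 (by simp [hij]))
  conv_lhs => rw [hcover]
  rw [hu, hb]
  congr 1
  apply Finset.sum_congr rfl
  intro j hj
  rw [Finset.mem_Ico] at hj
  exact Set.ncard_union_eq
    (hdisjFB true false j j hj.1 hj.1 (by simp))
    (hfin.subset Set.inter_subset_left) (hfin.subset Set.inter_subset_left)

lemma PSet_inter_bounceFree (k : ℕ) (a b : Bool) :
    PSet α β k a b ∩ {p | BounceFree α β p} = BFSet α β k a b := by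
  ext p
  simp only [PSet, BFSet, Set.mem_inter_iff, Set.mem_setOf_eq]
  tauto

lemma card_PSet_rec (hα : 0 < α) (hβ : 0 < β) (hcop : Nat.Coprime α β) {k : ℕ} {a b : Bool} :
    (PSet α β k a b).ncard = (BFSet α β k a b).ncard
      + ∑ j ∈ Finset.Ico 1 k,
          ((BFSet α β j a true).ncard * (PSet α β (k-j) false b).ncard
           + (BFSet α β j a false).ncard * (PSet α β (k-j) true b).ncard) := by
  rw [card_partition hα hβ hcop (PSet α β k a b) (le_refl _), PSet_inter_bounceFree]
  congr 1
  apply Finset.sum_congr rfl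
  intro j hj
  rw [Finset.mem_Ico] at hj
  rw [bijOn_ncard (FB_split hα hβ hcop hj.1 hj.2 (c := true)).1,
    bijOn_ncard (FB_split hα hβ hcop hj.1 hj.2 (c := false)).1,
    ncard_prod, ncard_prod]
  rfl

lemma BSet_eq_inter (k : ℕ) (a b : Bool) (l r : ℕ) :
    BSet α β k a b l r
      = PSet α β k a b ∩ {p | leftBounces α β p = l ∧ rightBounces α β p = r} := by
  ext p
  simp only [PSet, BSet, Set.mem_inter_iff, Set.mem_setOf_eq]
  tauto

lemma card_BSet_rec (hα : 0 < α) (hβ : 0 < β) (hcop : Nat.Coprime α β) {k : ℕ} {a b : Bool}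
    (l r : ℕ) :
    (BSet α β k a b l r).ncard
      = (if l = 0 ∧ r = 0 then (BFSet α β k a b).ncard else 0)
      + ∑ j ∈ Finset.Ico 1 k,
          ((if l = 0 then 0 else
              (BFSet α β j a true).ncard * (BSet α β (k-j) false b (l-1) r).ncard)
           + (if r = 0 then 0 else
              (BFSet α β j a false).ncard * (BSet α β (k-j) true b l (r-1)).ncard)) := by
  rw [BSet_eq_inter,
    card_partition hα hβ hcop _ Set.inter_subset_left]
  congr 1
  · -- bounce-free part
    by_cases h0 : l = 0 ∧ r = 0
    · rw [if_pos h0]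
      rw [show PSet α β k a b ∩ {p | leftBounces α β p = l ∧ rightBounces α β p = r}
            ∩ {p | BounceFree α β p} = BFSet α β k a b from ?_]
      ext p
      simp only [BFSet, Set.mem_inter_iff, Set.mem_setOf_eq, PSet]
      constructor
      · rintro ⟨⟨h1, _⟩, h2⟩
        exact ⟨h1.1, h2, h1.2.1, h1.2.2⟩
      · rintro ⟨h1, h2, h3, h4⟩
        obtain ⟨c1, c2⟩ := bounceFree_iff_counts.mp h2
        exact ⟨⟨⟨h1, h3, h4⟩, by omega, by omega⟩, h2⟩
    · rw [if_neg h0]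
      have hempty : PSet α β k a b ∩ {p | leftBounces α β p = l ∧ rightBounces α β p = r}
          ∩ {p | BounceFree α β p} = ∅ := by
        ext p
        simp only [Set.mem_inter_iff, Set.mem_setOf_eq, Set.mem_empty_iff_false, iff_false]
        rintro ⟨⟨_, hl, hr⟩, hbf⟩
        obtain ⟨c1, c2⟩ := bounceFree_iff_counts.mp hbf
        exact h0 ⟨by omega, by omega⟩
      rw [hempty, Set.ncard_empty]
  · apply Finset.sum_congr rfl
    intro j hj
    rw [Finset.mem_Ico] at hj
    have hIco := hj
    congr 1
    · -- left-bounce-first part, c = true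
      obtain ⟨hbij, hcnt⟩ := FB_split hα hβ hcop hj.1 hj.2 (c := true) (a := a) (b := b)
      simp only [Bool.not_true] at hbij hcnt
      have hre : PSet α β k a b ∩ {p | leftBounces α β p = l ∧ rightBounces α β p = r}
          ∩ {p | FB α β true j p}
          = (PSet α β k a b ∩ {p | FB α β true j p})
            ∩ {p | leftBounces α β p = l ∧ rightBounces α β p = r} := by
        ext p; simp only [Set.mem_inter_iff, Set.mem_setOf_eq]; tauto
      rw [hre]
      rcases Nat.eq_zero_or_pos l with rfl | hl
      · rw [if_pos rfl]
        have hempty : (PSet α β k a b ∩ {p | FB α β true j p})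
            ∩ {p | leftBounces α β p = 0 ∧ rightBounces α β p = r} = ∅ := by
          ext p
          simp only [Set.mem_inter_iff, Set.mem_setOf_eq, Set.mem_empty_iff_false, iff_false]
          rintro ⟨hp, hl0, _⟩
          obtain ⟨c1, _⟩ := hcnt p hp
          rw [leftBounces_eq] at hl0
          omega
        rw [hempty, Set.ncard_empty]
      · rw [if_neg (by omega)]
        have hbij2 := bijOn_inter hbij
          (P := fun p => leftBounces α β p = l ∧ rightBounces α β p = r)
          (Q := fun z => leftBounces α β z.2 = l - 1 ∧ rightBounces α β z.2 = r)
          (fun p hp => by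
            obtain ⟨c1, c2⟩ := hcnt p hp
            dsimp only
            rw [leftBounces_eq, leftBounces_eq, rightBounces_eq, rightBounces_eq]
            constructor
            · rintro ⟨e1, e2⟩; constructor <;> omega
            · rintro ⟨e1, e2⟩; constructor <;> omega)
        rw [bijOn_ncard hbij2]
        rw [show (BFSet α β j a true ×ˢ PSet α β (k-j) false b)
              ∩ {z : LatticePath × LatticePath |
                  leftBounces α β z.2 = l - 1 ∧ rightBounces α β z.2 = r}
            = BFSet α β j a true ×ˢ BSet α β (k-j) false b (l-1) r from ?_, ncard_prod]
        ext z
        simp only [Set.mem_inter_iff, Set.mem_prod, Set.mem_setOf_eq, BSet, PSet]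
        tauto
    · -- right-bounce-first part, c = false
      obtain ⟨hbij, hcnt⟩ := FB_split hα hβ hcop hj.1 hj.2 (c := false) (a := a) (b := b)
      simp only [Bool.not_false] at hbij hcnt
      have hre : PSet α β k a b ∩ {p | leftBounces α β p = l ∧ rightBounces α β p = r}
          ∩ {p | FB α β false j p}
          = (PSet α β k a b ∩ {p | FB α β false j p})
            ∩ {p | leftBounces α β p = l ∧ rightBounces α β p = r} := by
        ext p; simp only [Set.mem_inter_iff, Set.mem_setOf_eq]; tauto
      rw [hre]
      rcases Nat.eq_zero_or_pos r with rfl | hr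
      · rw [if_pos rfl]
        have hempty : (PSet α β k a b ∩ {p | FB α β false j p})
            ∩ {p | leftBounces α β p = l ∧ rightBounces α β p = 0} = ∅ := by
          ext p
          simp only [Set.mem_inter_iff, Set.mem_setOf_eq, Set.mem_empty_iff_false, iff_false]
          rintro ⟨hp, _, hr0⟩
          obtain ⟨c1, _⟩ := hcnt p hp
          rw [rightBounces_eq] at hr0
          omega
        rw [hempty, Set.ncard_empty]
      · rw [if_neg (by omega)]
        have hbij2 := bijOn_inter hbij
          (P := fun p => leftBounces α β p = l ∧ rightBounces α β p = r)
          (Q := fun z => leftBounces α β z.2 = l ∧ rightBounces α β z.2 = r - 1)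
          (fun p hp => by
            obtain ⟨c1, c2⟩ := hcnt p hp
            dsimp only
            rw [leftBounces_eq, leftBounces_eq, rightBounces_eq, rightBounces_eq]
            constructor
            · rintro ⟨e1, e2⟩; constructor <;> omega
            · rintro ⟨e1, e2⟩; constructor <;> omega)
        rw [bijOn_ncard hbij2]
        rw [show (BFSet α β j a false ×ˢ PSet α β (k-j) true b)
              ∩ {z : LatticePath × LatticePath |
                  leftBounces α β z.2 = l ∧ rightBounces α β z.2 = r - 1}
            = BFSet α β j a false ×ˢ BSet α β (k-j) true b l (r-1) from ?_, ncard_prod]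
        ext z
        simp only [Set.mem_inter_iff, Set.mem_prod, Set.mem_setOf_eq, BSet, PSet]
        tauto




variable {α β : ℕ}

lemma two_le_n (hα : 0 < α) (hβ : 0 < β) {k : ℕ} (hk : 1 ≤ k) : 2 ≤ (α+β)*k := by
  have h2 : (α+β) * 1 ≤ (α+β)*k := Nat.mul_le_mul_left _ hk
  omega

lemma PSet_def (k : ℕ) (a b : Bool) : PSet α β k a b
    = {p : LatticePath | InL α β k p ∧ FirstStep p a ∧ LastStep p b} := rfl

lemma ncard_PSet_en (hα : 0 < α) (hβ : 0 < β) {k : ℕ} (hk : 1 ≤ k) :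
    (PSet α β k true false).ncard = ((α+β)*k - 2).choose (α*k - 1) := by
  have hn := two_le_n hα hβ hk
  have hα1 : 1 ≤ α*k := Nat.mul_pos hα hk
  have hβ1 : 1 ≤ β*k := Nat.mul_pos hβ hk
  have hd : (α+β)*k = α*k + β*k := by ring
  rw [PSet_def, PS_eq α β k true false hn, Set.ncard_image_of_injective _ (enc_injective _ _)]
  rw [show {l : List Bool | l.length = (α+β)*k - 2
        ∧ l.count true + ((cond true 1 0) + (cond false 1 0)) = α*k
        ∧ l.count false + ((cond true 0 1) + (cond false 0 1)) = β*k}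
      = {l : List Bool | l.length = (α+β)*k - 2 ∧ l.count true = α*k - 1} from ?_,
    ncard_length_count]
  ext l
  have hcc := count_add_count l
  simp only [Set.mem_setOf_eq, Bool.cond_true, Bool.cond_false]
  constructor
  · rintro ⟨h1, h2, h3⟩; exact ⟨h1, by omega⟩
  · rintro ⟨h1, h2⟩; refine ⟨h1, by omega, by omega⟩

lemma ncard_PSet_ne (hα : 0 < α) (hβ : 0 < β) {k : ℕ} (hk : 1 ≤ k) :
    (PSet α β k false true).ncard = ((α+β)*k - 2).choose (α*k - 1) := by
  have hn := two_le_n hα hβ hk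
  have hα1 : 1 ≤ α*k := Nat.mul_pos hα hk
  have hβ1 : 1 ≤ β*k := Nat.mul_pos hβ hk
  have hd : (α+β)*k = α*k + β*k := by ring
  rw [PSet_def, PS_eq α β k false true hn, Set.ncard_image_of_injective _ (enc_injective _ _)]
  rw [show {l : List Bool | l.length = (α+β)*k - 2
        ∧ l.count true + ((cond false 1 0) + (cond true 1 0)) = α*k
        ∧ l.count false + ((cond false 0 1) + (cond true 0 1)) = β*k}
      = {l : List Bool | l.length = (α+β)*k - 2 ∧ l.count true = α*k - 1} from ?_,
    ncard_length_count]
  ext l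
  have hcc := count_add_count l
  simp only [Set.mem_setOf_eq, Bool.cond_true, Bool.cond_false]
  constructor
  · rintro ⟨h1, h2, h3⟩; exact ⟨h1, by omega⟩
  · rintro ⟨h1, h2⟩; refine ⟨h1, by omega, by omega⟩

lemma ncard_PSet_nn (hα : 0 < α) (hβ : 0 < β) {k : ℕ} (hk : 1 ≤ k) :
    (PSet α β k false false).ncard = ((α+β)*k - 2).choose (α*k) := by
  have hn := two_le_n hα hβ hk
  have hα1 : 1 ≤ α*k := Nat.mul_pos hα hk
  have hβ1 : 1 ≤ β*k := Nat.mul_pos hβ hk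
  have hd : (α+β)*k = α*k + β*k := by ring
  rw [PSet_def, PS_eq α β k false false hn, Set.ncard_image_of_injective _ (enc_injective _ _)]
  rw [show {l : List Bool | l.length = (α+β)*k - 2
        ∧ l.count true + ((cond false 1 0) + (cond false 1 0)) = α*k
        ∧ l.count false + ((cond false 0 1) + (cond false 0 1)) = β*k}
      = {l : List Bool | l.length = (α+β)*k - 2 ∧ l.count true = α*k} from ?_,
    ncard_length_count]
  ext l
  have hcc := count_add_count l
  simp only [Set.mem_setOf_eq, Bool.cond_true, Bool.cond_false]
  constructor
  · rintro ⟨h1, h2, h3⟩; exact ⟨h1, by omega⟩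
  · rintro ⟨h1, h2⟩; refine ⟨h1, by omega, by omega⟩

lemma ncard_PSet_ee (hα : 0 < α) (hβ : 0 < β) {k : ℕ} (hk : 1 ≤ k) :
    (PSet α β k true true).ncard = ((α+β)*k - 2).choose (β*k) := by
  have hn := two_le_n hα hβ hk
  have hα1 : 1 ≤ α*k := Nat.mul_pos hα hk
  have hβ1 : 1 ≤ β*k := Nat.mul_pos hβ hk
  have hd : (α+β)*k = α*k + β*k := by ring
  rw [PSet_def, PS_eq α β k true true hn, Set.ncard_image_of_injective _ (enc_injective _ _)]
  rw [show {l : List Bool | l.length = (α+β)*k - 2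
        ∧ l.count true + ((cond true 1 0) + (cond true 1 0)) = α*k
        ∧ l.count false + ((cond true 0 1) + (cond true 0 1)) = β*k}
      = {l : List Bool | l.length = (α+β)*k - 2 ∧ l.count false = β*k} from ?_,
    ncard_length_count_false]
  ext l
  have hcc := count_add_count l
  have hle : l.count false ≤ l.length := by
    have := count_add_count l; omega
  simp only [Set.mem_setOf_eq, Bool.cond_true, Bool.cond_false]
  constructor
  · rintro ⟨h1, h2, h3⟩; exact ⟨h1, by omega⟩
  · rintro ⟨h1, h2⟩; refine ⟨h1, by omega, by omega⟩




variable {α β : ℕ}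

noncomputable def gSer2 (α β : ℕ) (a b : Bool) : PowerSeries ℚ :=
  gfOf (fun k => PSet α β k a b)

noncomputable def fSer2 (α β : ℕ) (a b : Bool) : PowerSeries ℚ :=
  gfOf (fun k => BFSet α β k a b)

lemma coeff_gfOf (S : ℕ → Set LatticePath) (k : ℕ) :
    PowerSeries.coeff k (gfOf S) = if k = 0 then 0 else ((S k).ncard : ℚ) := by
  rw [gfOf, PowerSeries.coeff_mk]

lemma gSer2_en (hα : 0 < α) (hβ : 0 < β) : gSer2 α β true false = genSer α β := by
  ext k
  rw [gSer2, coeff_gfOf, genSer, PowerSeries.coeff_mk]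
  rcases Nat.eq_zero_or_pos k with rfl | hk
  · simp
  · rw [if_neg (by omega), if_neg (by omega), ncard_PSet_en hα hβ hk]

lemma gSer2_ne (hα : 0 < α) (hβ : 0 < β) : gSer2 α β false true = genSer α β := by
  ext k
  rw [gSer2, coeff_gfOf, genSer, PowerSeries.coeff_mk]
  rcases Nat.eq_zero_or_pos k with rfl | hk
  · simp
  · rw [if_neg (by omega), if_neg (by omega), ncard_PSet_ne hα hβ hk]

lemma gSer2_ee (hα : 0 < α) (hβ : 0 < β) : gSer2 α β true true = geeSer α β := by
  ext k
  rw [gSer2, coeff_gfOf, geeSer, PowerSeries.coeff_mk]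
  rcases Nat.eq_zero_or_pos k with rfl | hk
  · simp
  · rw [if_neg (by omega), if_neg (by omega), ncard_PSet_ee hα hβ hk]

lemma gSer2_nn (hα : 0 < α) (hβ : 0 < β) : gSer2 α β false false = gnnSer α β := by
  ext k
  rw [gSer2, coeff_gfOf, gnnSer, PowerSeries.coeff_mk]
  rcases Nat.eq_zero_or_pos k with rfl | hk
  · simp
  · rw [if_neg (by omega), if_neg (by omega), ncard_PSet_nn hα hβ hk]

lemma coeff_gfOf_mul_gfOf (S T : ℕ → Set LatticePath) (k : ℕ) :
    PowerSeries.coeff k (gfOf S * gfOf T)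
      = ∑ j ∈ Finset.Ico 1 k, ((S j).ncard : ℚ) * ((T (k-j)).ncard : ℚ) := by
  rw [PowerSeries.coeff_mul, Finset.Nat.sum_antidiagonal_eq_sum_range_succ_mk]
  have hsub : Finset.Ico 1 k ⊆ Finset.range k.succ := by
    intro i hi; rw [Finset.mem_Ico] at hi; rw [Finset.mem_range]; omega
  rw [← Finset.sum_subset hsub ?van]
  · apply Finset.sum_congr rfl
    intro i hi
    rw [Finset.mem_Ico] at hi
    rw [coeff_gfOf, coeff_gfOf, if_neg (by omega), if_neg (by omega)]
  case van =>
    intro i hi hni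
    rw [Finset.mem_range] at hi
    rw [Finset.mem_Ico] at hni
    rw [coeff_gfOf, coeff_gfOf]
    rcases Nat.eq_zero_or_pos i with rfl | hi1
    · rw [if_pos rfl, zero_mul]
    · have : i = k := by omega
      subst this
      rw [Nat.sub_self, if_pos rfl, mul_zero]

/-- The univariate first-bounce identity. -/
lemma B_identity (hα : 0 < α) (hβ : 0 < β) (hcop : Nat.Coprime α β) (a b : Bool) :
    gSer2 α β a b = fSer2 α β a b + fSer2 α β a true * gSer2 α β false b
      + fSer2 α β a false * gSer2 α β true b := by
  ext k
  rw [map_add, map_add, gSer2, fSer2, coeff_gfOf, coeff_gfOf]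
  rw [show fSer2 α β a true * gSer2 α β false b
      = gfOf (fun k => BFSet α β k a true) * gfOf (fun k => PSet α β k false b) from rfl,
    show fSer2 α β a false * gSer2 α β true b
      = gfOf (fun k => BFSet α β k a false) * gfOf (fun k => PSet α β k true b) from rfl,
    coeff_gfOf_mul_gfOf, coeff_gfOf_mul_gfOf]
  rcases Nat.eq_zero_or_pos k with rfl | hk
  · simp
  · rw [if_neg (by omega), if_neg (by omega)]
    rw [card_PSet_rec hα hβ hcop (k := k) (a := a) (b := b)]
    push_cast
    rw [Finset.sum_add_distrib]
    ring




variable {α β : ℕ}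

lemma fin3_cases {P : Fin 3 → Prop} (h0 : P 0) (h1 : P 1) (h2 : P 2) : ∀ a : Fin 3, P a := by
  intro a
  fin_cases a
  · exact h0
  · exact h1
  · exact h2

lemma coeff_toMv (φ : PowerSeries ℚ) (d : Fin 3 →₀ ℕ) :
    MvPowerSeries.coeff d (toMv φ)
      = if d 1 = 0 ∧ d 2 = 0 then PowerSeries.coeff (d 0) φ else 0 := rfl

lemma coeff_X_mul3 (s : Fin 3) (A : MvPowerSeries (Fin 3) ℚ) (d : Fin 3 →₀ ℕ) :
    MvPowerSeries.coeff d (MvPowerSeries.X s * A)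
      = if d s = 0 then 0 else MvPowerSeries.coeff (d - Finsupp.single s 1) A := by
  classical
  rw [MvPowerSeries.coeff_mul]
  by_cases h : d s = 0
  · rw [if_pos h]
    apply Finset.sum_eq_zero
    rintro ⟨u, v⟩ huv
    rw [Finset.HasAntidiagonal.mem_antidiagonal] at huv
    rw [MvPowerSeries.coeff_X]
    split
    · exfalso
      rename_i heq
      have h2 : u s + v s = d s := by rw [← huv]; rw [Finsupp.add_apply]
      rw [show u = (fun₀ | s => 1) from heq] at h2
      rw [Finsupp.single_eq_same] at h2
      omega
    · rw [zero_mul]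
  · rw [if_neg h]
    rw [Finset.sum_eq_single (Finsupp.single s 1, d - Finsupp.single s 1)]
    · rw [MvPowerSeries.coeff_X, if_pos rfl, one_mul]
    · rintro ⟨u, v⟩ huv hne
      rw [Finset.HasAntidiagonal.mem_antidiagonal] at huv
      rw [MvPowerSeries.coeff_X]
      split
      · exfalso
        rename_i heq
        apply hne
        rw [Prod.mk.injEq]
        refine ⟨heq, ?_⟩
        rw [← heq, ← huv, add_tsub_cancel_left]
      · rw [zero_mul]
    · intro hnm
      exfalso
      apply hnm
      rw [Finset.HasAntidiagonal.mem_antidiagonal]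
      apply add_tsub_cancel_of_le
      rw [Finsupp.single_le_iff]
      omega

lemma upd0 (f : Fin 3 →₀ ℕ) (v : ℕ) : (f.update 0 v) 0 = v := by
  simp [Finsupp.coe_update]

lemma upd1 (f : Fin 3 →₀ ℕ) (v : ℕ) : (f.update 0 v) 1 = f 1 := by
  simp [Finsupp.coe_update, Function.update_apply]

lemma upd2 (f : Fin 3 →₀ ℕ) (v : ℕ) : (f.update 0 v) 2 = f 2 := by
  simp [Finsupp.coe_update, Function.update_apply]

lemma coeff_toMv_mul (φ : PowerSeries ℚ) (A : MvPowerSeries (Fin 3) ℚ) (d : Fin 3 →₀ ℕ) :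
    MvPowerSeries.coeff d (toMv φ * A)
      = ∑ ij ∈ Finset.HasAntidiagonal.antidiagonal (d 0),
          PowerSeries.coeff ij.1 φ * MvPowerSeries.coeff (Finsupp.update d 0 ij.2) A := by
  classical
  rw [MvPowerSeries.coeff_mul]
  rw [← Finset.sum_filter_of_ne
    (p := fun uv : (Fin 3 →₀ ℕ) × (Fin 3 →₀ ℕ) => uv.1 1 = 0 ∧ uv.1 2 = 0) ?side]
  · apply Finset.sum_nbij' (i := fun uv => (uv.1 0, uv.2 0))
      (j := fun ij => (Finsupp.single 0 ij.1, Finsupp.update d 0 ij.2))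
    · rintro ⟨u, v⟩ huv
      rw [Finset.mem_filter, Finset.HasAntidiagonal.mem_antidiagonal] at huv
      rw [Finset.HasAntidiagonal.mem_antidiagonal]
      have h2 : u 0 + v 0 = d 0 := by rw [← huv.1]; rw [Finsupp.add_apply]
      exact h2
    · rintro ⟨i, j⟩ hij
      rw [Finset.HasAntidiagonal.mem_antidiagonal] at hij
      dsimp only at hij ⊢
      rw [Finset.mem_filter, Finset.HasAntidiagonal.mem_antidiagonal]
      refine ⟨?_, ?_, ?_⟩
      · apply Finsupp.ext
        apply fin3_cases
        · rw [Finsupp.add_apply, Finsupp.single_eq_same, upd0]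
          exact hij
        · rw [Finsupp.add_apply, Finsupp.single_eq_of_ne (by decide), upd1, zero_add]
        · rw [Finsupp.add_apply, Finsupp.single_eq_of_ne (by decide), upd2, zero_add]
      · rw [Finsupp.single_eq_of_ne (by decide)]
      · rw [Finsupp.single_eq_of_ne (by decide)]
    · rintro ⟨u, v⟩ huv
      rw [Finset.mem_filter, Finset.HasAntidiagonal.mem_antidiagonal] at huv
      obtain ⟨huvsum, hu1, hu2⟩ := huv
      dsimp only at huvsum hu1 hu2 ⊢
      have hv : ∀ x : Fin 3, u x + v x = d x := by
        intro x; rw [← huvsum]; rw [Finsupp.add_apply]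
      rw [Prod.mk.injEq]
      constructor
      · apply Finsupp.ext
        apply fin3_cases
        · rw [Finsupp.single_eq_same]
        · rw [Finsupp.single_eq_of_ne (by decide), hu1]
        · rw [Finsupp.single_eq_of_ne (by decide), hu2]
      · apply Finsupp.ext
        apply fin3_cases
        · rw [upd0]
        · rw [upd1]
          have := hv 1; omega
        · rw [upd2]
          have := hv 2; omega
    · rintro ⟨i, j⟩ hij
      dsimp only
      rw [Finsupp.single_eq_same, upd0]
    · rintro ⟨u, v⟩ huv
      rw [Finset.mem_filter, Finset.HasAntidiagonal.mem_antidiagonal] at huv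
      obtain ⟨huvsum, hu1, hu2⟩ := huv
      dsimp only at huvsum hu1 hu2 ⊢
      have hv : ∀ x : Fin 3, u x + v x = d x := by
        intro x; rw [← huvsum]; rw [Finsupp.add_apply]
      have hveq : d.update 0 (v 0) = v := by
        apply Finsupp.ext
        apply fin3_cases
        · rw [upd0]
        · rw [upd1]; have := hv 1; omega
        · rw [upd2]; have := hv 2; omega
      rw [coeff_toMv, if_pos ⟨hu1, hu2⟩, hveq]
  case side =>
    rintro ⟨u, v⟩ _ hne
    by_contra hcond
    apply hne
    rw [coeff_toMv, if_neg hcond, zero_mul]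

lemma toMv_add (φ ψ : PowerSeries ℚ) : toMv (φ + ψ) = toMv φ + toMv ψ := by
  apply MvPowerSeries.ext
  intro d
  rw [map_add, coeff_toMv, coeff_toMv, coeff_toMv, map_add]
  split
  · rfl
  · rw [add_zero]

lemma toMv_mul (φ ψ : PowerSeries ℚ) : toMv (φ * ψ) = toMv φ * toMv ψ := by
  apply MvPowerSeries.ext
  intro d
  rw [coeff_toMv_mul, coeff_toMv]
  by_cases h : d 1 = 0 ∧ d 2 = 0
  · rw [if_pos h, PowerSeries.coeff_mul]
    apply Finset.sum_congr rfl
    rintro ⟨i, j⟩ hij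
    dsimp only
    have e1 : (d.update 0 j) 1 = 0 := by rw [upd1]; exact h.1
    have e2 : (d.update 0 j) 2 = 0 := by rw [upd2]; exact h.2
    rw [coeff_toMv, if_pos ⟨e1, e2⟩, upd0]
  · rw [if_neg h]
    symm
    apply Finset.sum_eq_zero
    rintro ⟨i, j⟩ _
    dsimp only
    have he : ¬ ((d.update 0 j) 1 = 0 ∧ (d.update 0 j) 2 = 0) := by
      rw [upd1, upd2]; exact h
    rw [coeff_toMv, if_neg he, mul_zero]




variable {α β : ℕ}

lemma coeff_G3ab (a b : Bool) (d : Fin 3 →₀ ℕ) :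
    MvPowerSeries.coeff d (G3ab α β a b)
      = if d 0 = 0 then 0 else ((BSet α β (d 0) a b (d 1) (d 2)).ncard : ℚ) := rfl

lemma coeff_fSer2 (a b : Bool) (k : ℕ) :
    PowerSeries.coeff k (fSer2 α β a b)
      = if k = 0 then 0 else ((BFSet α β k a b).ncard : ℚ) := coeff_gfOf _ k

lemma sub1_0 (d : Fin 3 →₀ ℕ) : ((d - Finsupp.single 1 1 : Fin 3 →₀ ℕ)) 0 = d 0 := by
  rw [Finsupp.tsub_apply, Finsupp.single_eq_of_ne (by decide), Nat.sub_zero]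

lemma sub1_1 (d : Fin 3 →₀ ℕ) : ((d - Finsupp.single 1 1 : Fin 3 →₀ ℕ)) 1 = d 1 - 1 := by
  rw [Finsupp.tsub_apply, Finsupp.single_eq_same]

lemma sub1_2 (d : Fin 3 →₀ ℕ) : ((d - Finsupp.single 1 1 : Fin 3 →₀ ℕ)) 2 = d 2 := by
  rw [Finsupp.tsub_apply, Finsupp.single_eq_of_ne (by decide), Nat.sub_zero]

lemma sub2_0 (d : Fin 3 →₀ ℕ) : ((d - Finsupp.single 2 1 : Fin 3 →₀ ℕ)) 0 = d 0 := by
  rw [Finsupp.tsub_apply, Finsupp.single_eq_of_ne (by decide), Nat.sub_zero]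

lemma sub2_1 (d : Fin 3 →₀ ℕ) : ((d - Finsupp.single 2 1 : Fin 3 →₀ ℕ)) 1 = d 1 := by
  rw [Finsupp.tsub_apply, Finsupp.single_eq_of_ne (by decide), Nat.sub_zero]

lemma sub2_2 (d : Fin 3 →₀ ℕ) : ((d - Finsupp.single 2 1 : Fin 3 →₀ ℕ)) 2 = d 2 - 1 := by
  rw [Finsupp.tsub_apply, Finsupp.single_eq_same]

lemma antidiag_to_Ico (A : ℕ) (f g : ℕ → ℚ) (hf : f 0 = 0) (hg : g 0 = 0) :
    ∑ ij ∈ Finset.HasAntidiagonal.antidiagonal A, f ij.1 * g ij.2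
      = ∑ j ∈ Finset.Ico 1 A, f j * g (A - j) := by
  rw [Finset.Nat.sum_antidiagonal_eq_sum_range_succ_mk]
  have hsub : Finset.Ico 1 A ⊆ Finset.range A.succ := by
    intro i hi; rw [Finset.mem_Ico] at hi; rw [Finset.mem_range]; omega
  rw [← Finset.sum_subset hsub ?van]
  case van =>
    intro i hi hni
    rw [Finset.mem_range] at hi
    rw [Finset.mem_Ico] at hni
    rcases Nat.eq_zero_or_pos i with rfl | hi1
    · rw [hf, zero_mul]
    · have : i = A := by omega
      subst this
      rw [Nat.sub_self, hg, mul_zero]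

lemma key_scalar (hα : 0 < α) (hβ : 0 < β) (hcop : Nat.Coprime α β) (a b : Bool)
    (A L R : ℕ) :
    (if A = 0 then (0:ℚ) else ((BSet α β A a b L R).ncard : ℚ))
    = (if L = 0 ∧ R = 0 then (if A = 0 then (0:ℚ) else ((BFSet α β A a b).ncard : ℚ)) else 0)
    + (if L = 0 then 0 else ∑ ij ∈ Finset.HasAntidiagonal.antidiagonal A,
        (if ij.1 = 0 then (0:ℚ) else ((BFSet α β ij.1 a true).ncard : ℚ))
        * (if ij.2 = 0 then (0:ℚ) else ((BSet α β ij.2 false b (L-1) R).ncard : ℚ)))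
    + (if R = 0 then 0 else ∑ ij ∈ Finset.HasAntidiagonal.antidiagonal A,
        (if ij.1 = 0 then (0:ℚ) else ((BFSet α β ij.1 a false).ncard : ℚ))
        * (if ij.2 = 0 then (0:ℚ) else ((BSet α β ij.2 true b L (R-1)).ncard : ℚ))) := by
  rcases Nat.eq_zero_or_pos A with rfl | hA
  · simp
  · have hIcoSum : ∀ (c : Bool) (l2 r2 : ℕ),
        ∑ ij ∈ Finset.HasAntidiagonal.antidiagonal A,
          (if ij.1 = 0 then (0:ℚ) else ((BFSet α β ij.1 a c).ncard : ℚ))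
          * (if ij.2 = 0 then (0:ℚ) else ((BSet α β ij.2 (!c) b l2 r2).ncard : ℚ))
        = ∑ j ∈ Finset.Ico 1 A,
            ((BFSet α β j a c).ncard : ℚ) * ((BSet α β (A-j) (!c) b l2 r2).ncard : ℚ) := by
      intro c l2 r2
      refine (antidiag_to_Ico A
        (fun n => if n = 0 then (0:ℚ) else ((BFSet α β n a c).ncard : ℚ))
        (fun n => if n = 0 then (0:ℚ) else ((BSet α β n (!c) b l2 r2).ncard : ℚ))
        (if_pos rfl) (if_pos rfl)).trans ?_
      apply Finset.sum_congr rfl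
      intro j hj
      rw [Finset.mem_Ico] at hj
      rw [if_neg (by omega), if_neg (by omega)]
    have h1 := hIcoSum true
    have h2 := hIcoSum false
    simp only [Bool.not_true, Bool.not_false] at h1 h2
    rw [if_neg (show ¬ (A = 0) by omega), if_neg (show ¬ (A = 0) by omega),
      card_BSet_rec hα hβ hcop L R, h1 (L-1) R, h2 L (R-1)]
    push_cast [apply_ite (Nat.cast : ℕ → ℚ)]
    by_cases hL : L = 0 <;> by_cases hR : R = 0 <;>
      simp [hL, hR, h1, h2, Finset.sum_add_distrib]




variable {α β : ℕ}

lemma sVar_def : sVar = MvPowerSeries.X 1 := rfl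
lemma tVar_def : tVar = MvPowerSeries.X 2 := rfl

lemma A_identity (hα : 0 < α) (hβ : 0 < β) (hcop : Nat.Coprime α β) (a b : Bool) :
    G3ab α β a b = toMv (fSer2 α β a b)
      + sVar * (toMv (fSer2 α β a true) * G3ab α β false b)
      + tVar * (toMv (fSer2 α β a false) * G3ab α β true b) := by
  apply MvPowerSeries.ext
  intro d
  rw [map_add, map_add, coeff_G3ab, coeff_toMv, sVar_def, tVar_def, coeff_X_mul3,
    coeff_X_mul3, coeff_toMv_mul, coeff_toMv_mul]
  simp only [coeff_G3ab, coeff_fSer2, upd0, upd1, upd2, sub1_0, sub1_1, sub1_2,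
    sub2_0, sub2_1, sub2_2]
  have hks := key_scalar hα hβ hcop a b (d 0) (d 1) (d 2)
  by_cases h12 : d 1 = 0 ∧ d 2 = 0
  · rw [if_pos h12, if_pos h12.1, if_pos h12.2] at *
    rw [hks]
  · rw [if_neg h12] at *
    rw [hks]



variable {α β : ℕ}

lemma D3_def : D3 α β = 1 + (2 - sVar - tVar) * toMv (genSer α β)
    + (1 - sVar) * (1 - tVar) *
        (toMv (genSer α β) ^ 2 - toMv (geeSer α β) * toMv (gnnSer α β)) := rfl

lemma constCoeff_toMv (φ : PowerSeries ℚ) (h : PowerSeries.coeff 0 φ = 0) :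
    MvPowerSeries.constantCoeff (σ := Fin 3) (R := ℚ) (toMv φ) = 0 := by
  rw [← MvPowerSeries.coeff_zero_eq_constantCoeff_apply, coeff_toMv]
  split
  · exact h
  · rfl

lemma cc_gen : MvPowerSeries.constantCoeff (σ := Fin 3) (R := ℚ) (toMv (genSer α β)) = 0 :=
  constCoeff_toMv _ (by rw [genSer, PowerSeries.coeff_mk]; simp)

lemma cc_gee : MvPowerSeries.constantCoeff (σ := Fin 3) (R := ℚ) (toMv (geeSer α β)) = 0 :=
  constCoeff_toMv _ (by rw [geeSer, PowerSeries.coeff_mk]; simp)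

lemma cc_gnn : MvPowerSeries.constantCoeff (σ := Fin 3) (R := ℚ) (toMv (gnnSer α β)) = 0 :=
  constCoeff_toMv _ (by rw [gnnSer, PowerSeries.coeff_mk]; simp)

lemma cc_f (a b : Bool) : MvPowerSeries.constantCoeff (σ := Fin 3) (R := ℚ) (toMv (fSer2 α β a b)) = 0 :=
  constCoeff_toMv _ (by rw [fSer2, gfOf, PowerSeries.coeff_mk]; simp)

lemma cc_s : MvPowerSeries.constantCoeff (σ := Fin 3) (R := ℚ) sVar = 0 := by
  rw [sVar_def, MvPowerSeries.constantCoeff_X]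

lemma cc_t : MvPowerSeries.constantCoeff (σ := Fin 3) (R := ℚ) tVar = 0 := by
  rw [tVar_def, MvPowerSeries.constantCoeff_X]

theorem statement10' (hα : 0 < α) (hβ : 0 < β) (hcop : Nat.Coprime α β) :
    G3ab α β true false * D3 α β
      = toMv (genSer α β) + (1 - sVar) *
          (toMv (genSer α β) ^ 2 - toMv (geeSer α β) * toMv (gnnSer α β)) ∧
    G3ab α β false true * D3 α β
      = toMv (genSer α β) + (1 - tVar) *
          (toMv (genSer α β) ^ 2 - toMv (geeSer α β) * toMv (gnnSer α β)) := by
  have hA1 := A_identity hα hβ hcop true false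
  have hA2 := A_identity hα hβ hcop false false
  have hA3 := A_identity hα hβ hcop false true
  have hA4 := A_identity hα hβ hcop true true
  have hBtt := congrArg toMv (B_identity hα hβ hcop true true)
  have hBtf := congrArg toMv (B_identity hα hβ hcop true false)
  have hBft := congrArg toMv (B_identity hα hβ hcop false true)
  have hBff := congrArg toMv (B_identity hα hβ hcop false false)
  rw [toMv_add, toMv_add, toMv_mul, toMv_mul] at hBtt hBtf hBft hBff
  rw [gSer2_ee hα hβ, gSer2_ne hα hβ] at hBtt
  rw [gSer2_en hα hβ, gSer2_nn hα hβ] at hBtf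
  rw [gSer2_ne hα hβ, gSer2_ee hα hβ] at hBft
  rw [gSer2_nn hα hβ, gSer2_en hα hβ] at hBff
  rw [D3_def]
  have hu : IsUnit (((1 + toMv (genSer α β))^2 - toMv (geeSer α β) * toMv (gnnSer α β))^2
      * ((1 - tVar * toMv (fSer2 α β true false)) * (1 - sVar * toMv (fSer2 α β false true))
        - sVar * tVar * (toMv (fSer2 α β true true) * toMv (fSer2 α β false false)))) := by
    rw [MvPowerSeries.isUnit_iff_constantCoeff]
    simp only [map_mul, map_pow, map_add, map_sub, map_one, cc_gen, cc_gee, cc_gnn,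
      cc_s, cc_t, cc_f]
    norm_num
  set s := sVar with hs
  set t := tVar with ht
  set gen := toMv (genSer α β) with hgen
  set gee := toMv (geeSer α β) with hgee0
  set gnn := toMv (gnnSer α β) with hgnn0
  set fee := toMv (fSer2 α β true true) with hfee0
  set fen := toMv (fSer2 α β true false) with hfen0
  set fne := toMv (fSer2 α β false true) with hfne0
  set fnn := toMv (fSer2 α β false false) with hfnn0
  set Gen := G3ab α β true false with hGen0
  set Gnn := G3ab α β false false with hGnn0
  set Gne := G3ab α β false true with hGne0
  set Gee := G3ab α β true true with hGee0
  have hfee : ((1+gen)^2 - gee*gnn) * fee = gee := by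
    linear_combination (-(1+gen))*hBtt + gee*hBtf
  have hfen : ((1+gen)^2 - gee*gnn) * fen = gen + (gen^2 - gee*gnn) := by
    linear_combination gnn*hBtt - (1+gen)*hBtf
  have hfne : ((1+gen)^2 - gee*gnn) * fne = gen + (gen^2 - gee*gnn) := by
    linear_combination (-(1+gen))*hBft + gee*hBff
  have hfnn : ((1+gen)^2 - gee*gnn) * fnn = gnn := by
    linear_combination gnn*hBft - (1+gen)*hBff
  have hGen : ((1 - t*fen)*(1 - s*fne) - s*t*(fee*fnn)) * Gen
      = fen*(1-s*fne) + s*(fee*fnn) := by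
    linear_combination (1 - s*fne)*hA1 + (s*fee)*hA2
  have hGne : ((1 - t*fen)*(1 - s*fne) - s*t*(fee*fnn)) * Gne
      = fne*(1-t*fen) + t*(fnn*fee) := by
    linear_combination (1 - t*fen)*hA3 + (t*fnn)*hA4
  constructor
  · apply hu.mul_left_cancel
    linear_combination ((1 + (2 - s - t)*gen + (1 - s)*(1 - t)*(gen^2 - gee*gnn))*((1+gen)^2 - gee*gnn)^2)*hGen + ((1 + (2 - s - t)*gen + (1 - s)*(1 - t)*(gen^2 - gee*gnn))*s*(((1+gen)^2 - gee*gnn)*fnn) + (gen + (1 - s)*(gen^2 - gee*gnn))*s*t*(((1+gen)^2 - gee*gnn)*fnn))*hfee + ((1 + (2 - s - t)*gen + (1 - s)*(1 - t)*(gen^2 - gee*gnn))*(((1+gen)^2 - gee*gnn) - s*((1+gen)^2 - gee*gnn)*fne) + (gen + (1 - s)*(gen^2 - gee*gnn))*(t*((1+gen)^2 - gee*gnn) - s*t*((1+gen)^2 - gee*gnn)*fne))*hfen + (-((1 + (2 - s - t)*gen + (1 - s)*(1 - t)*(gen^2 - gee*gnn))*s*(gen+(gen^2 - gee*gnn)))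 + (gen + (1 - s)*(gen^2 - gee*gnn))*(s*((1+gen)^2 - gee*gnn) - s*t*(gen+(gen^2 - gee*gnn))))*hfne + ((1 + (2 - s - t)*gen + (1 - s)*(1 - t)*(gen^2 - gee*gnn))*s*gee + (gen + (1 - s)*(gen^2 - gee*gnn))*s*t*gee)*hfnn
  · apply hu.mul_left_cancel
    linear_combination ((1 + (2 - s - t)*gen + (1 - s)*(1 - t)*(gen^2 - gee*gnn))*((1+gen)^2 - gee*gnn)^2)*hGne + ((1 + (2 - s - t)*gen + (1 - s)*(1 - t)*(gen^2 - gee*gnn))*t*gnn + (gen + (1 - t)*(gen^2 - gee*gnn))*s*t*(((1+gen)^2 - gee*gnn)*fnn))*hfee + (-((1 + (2 - s - t)*gen + (1 - s)*(1 - t)*(gen^2 - gee*gnn))*t*(gen+(gen^2 - gee*gnn))) + (gen + (1 - t)*(gen^2 - gee*gnn))*(t*((1+gen)^2 - gee*gnn) - s*t*(((1+gen)^2 - gee*gnn)*fne)))*hfen + ((1 + (2 - s - t)*gen + (1 - s)*(1 - t)*(gen^2 - gee*gnn))*(((1+gen)^2 - gee*gnn) - t*(((1+gen)^2 - gee*gnn)*fen))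 + (gen + (1 - t)*(gen^2 - gee*gnn))*(s*((1+gen)^2 - gee*gnn) - s*t*(gen+(gen^2 - gee*gnn))))*hfne + ((1 + (2 - s - t)*gen + (1 - s)*(1 - t)*(gen^2 - gee*gnn))*t*(((1+gen)^2 - gee*gnn)*fee) + (gen + (1 - t)*(gen^2 - gee*gnn))*s*t*gee)*hfnn



end S10

/-- In `ℚ[[x,s,t]]`,
`G_en(x,s,t)·D = g_en + (1−s)·(g_en² − g_ee·g_nn)` and
`G_ne(x,s,t)·D = g_en + (1−t)·(g_en² − g_ee·g_nn)`. -/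
theorem statement10 (α β : ℕ) (hα : 0 < α) (hβ : 0 < β) (hcop : Nat.Coprime α β) :
    G3ab α β true false * D3 α β
      = toMv (genSer α β) + (1 - sVar) *
          (toMv (genSer α β) ^ 2 - toMv (geeSer α β) * toMv (gnnSer α β)) ∧
    G3ab α β false true * D3 α β
      = toMv (genSer α β) + (1 - tVar) *
          (toMv (genSer α β) ^ 2 - toMv (geeSer α β) * toMv (gnnSer α β)) := by
  exact S10.statement10' hα hβ hcop
end
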